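/- arXiv:2605.03894 — 6 statements merged into one kernel-verified Lean document; each statement's English description precedes it below -/
import Mathlib

section
/- Let G be a path-connected graph and p : G̃ → G the tree covering of G (the graph lift of the topological universal cover of the realization G_R). If σ : I^n → G is a singular n-cube such that the image of every 2-dimensional face of σ is not a 3-cycle or a 4-cycle, then for every lift q̃ ∈ G̃ of σ(0) there is a unique graph map σ̃ : I^n → G̃ with p ∘ σ̃ = σ and σ̃(0) = q̃. -/
/-- The discrete `n`-cube graph on `{0,1}^n`: two vertices are adjacent iff they
differ in exactly one coordinate. -/
def Cube (n : ℕ) : SimpleGraph (Fin n → Bool) where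
  Adj x y := ∃! i, x i ≠ y i
  symm := by
    constructor
    rintro x y ⟨i, hi, hu⟩
    exact ⟨i, hi.symm, fun j hj => hu j hj.symm⟩
  loopless := by
    constructor
    rintro x ⟨i, hi, -⟩
    exact hi rfl

/-- A graph map sends each edge to an edge or to a vertex. -/
def IsGraphMap {V W : Type*} (G : SimpleGraph V) (H : SimpleGraph W) (f : V → W) : Prop :=
  ∀ ⦃u v⦄, G.Adj u v → H.Adj (f u) (f v) ∨ f u = f v

/-- The face of a singular cube obtained by fixing the `i`-th coordinate to `b`
(`b = false` gives the front face `f_i^-`, `b = true` the back face `f_i^+`). -/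
def face {V : Type*} {n : ℕ} (i : Fin (n + 1)) (b : Bool)
    (σ : (Fin (n + 1) → Bool) → V) : (Fin n → Bool) → V :=
  fun t => σ (i.insertNth b t)

/-- The reflection `T_i` of the discrete cube, flipping the `i`-th coordinate. -/
def reflT {n : ℕ} (i : Fin n) (t : Fin n → Bool) : Fin n → Bool :=
  Function.update t i (!t i)

/-- The transposition `T_{i,j}` of the discrete cube, swapping coordinates `i` and `j`. -/
def swapT {n : ℕ} (i j : Fin n) (t : Fin n → Bool) : Fin n → Bool :=
  t ∘ Equiv.swap i j

/-- A singular cube is degenerate iff it does not depend on some coordinate,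
equivalently some pair of opposite faces `f_i^- σ = f_i^+ σ` agree. -/
def IsDegenerate {V : Type*} {m : ℕ} (τ : (Fin m → Bool) → V) : Prop :=
  ∃ i : Fin m, ∀ t, τ t = τ (reflT i t)

/-- A combinatorial covering of graphs: `p` restricts to a bijection between the
neighbors of each vertex and the neighbors of its image (the graph lift of a
topological covering of the realizations). -/
def IsGraphCovering {V W : Type*} (T : SimpleGraph V) (G : SimpleGraph W) (p : V → W) : Prop :=
  ∀ v, Set.BijOn p (T.neighborSet v) (G.neighborSet (p v))

namespace LiftAux

lemma cube_adj_of {n : ℕ} {x y : Fin n → Bool} (i : Fin n) (h : x i ≠ y i)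
    (hu : ∀ j, j ≠ i → x j = y j) : (Cube n).Adj x y :=
  ⟨i, h, fun j hj => by_contra fun hji => hj (hu j hji)⟩

lemma cube_adj_ne {n : ℕ} {x y : Fin n → Bool} (h : (Cube n).Adj x y) {j : Fin n}
    (hj : x j ≠ y j) : ∀ k, k ≠ j → x k = y k := by
  obtain ⟨i, hi, hu⟩ := h
  have hji : j = i := hu j hj
  subst hji
  exact fun k hk => by_contra fun h' => hk (hu k h')

lemma fin2_cases (s : Fin 2 → Bool) :
    s = ![false, false] ∨ s = ![false, true] ∨ s = ![true, false] ∨ s = ![true, true] := by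
  have h : s = ![s 0, s 1] := by funext i; fin_cases i <;> rfl
  cases h0 : s 0 <;> cases h1 : s 1 <;> rw [h0, h1] at h <;> tauto

lemma adj_ff_tf : (Cube 2).Adj ![false, false] ![true, false] :=
  cube_adj_of 0 (by decide) (by decide)
lemma adj_ff_ft : (Cube 2).Adj ![false, false] ![false, true] :=
  cube_adj_of 1 (by decide) (by decide)
lemma adj_tf_tt : (Cube 2).Adj ![true, false] ![true, true] :=
  cube_adj_of 1 (by decide) (by decide)
lemma adj_ft_tt : (Cube 2).Adj ![false, true] ![true, true] :=
  cube_adj_of 0 (by decide) (by decide)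

lemma range_eq {W : Type*} (τ : (Fin 2 → Bool) → W) :
    Set.range τ = {τ ![false, false], τ ![false, true], τ ![true, false], τ ![true, true]} := by
  ext w
  simp only [Set.mem_range, Set.mem_insert_iff, Set.mem_singleton_iff]
  constructor
  · rintro ⟨s, rfl⟩
    rcases fin2_cases s with rfl | rfl | rfl | rfl <;> tauto
  · rintro (rfl | rfl | rfl | rfl) <;> exact ⟨_, rfl⟩

lemma triple_ncard {α : Type*} {a b c : α} (hab : a ≠ b) (hac : a ≠ c) (hbc : b ≠ c) :
    ({a, b, c} : Set α).ncard = 3 := by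
  rw [Set.ncard_insert_of_notMem (by simp [hab, hac]), Set.ncard_pair hbc]

section

variable {V W : Type*} {G : SimpleGraph W} {T : SimpleGraph V} {p : V → W}

open Classical in
noncomputable def step (T : SimpleGraph V) (p : V → W) (a : V) (w : W) : V :=
  if h : ∃ b, T.Adj a b ∧ p b = w then h.choose else a

variable (hp : IsGraphCovering T G p)
include hp

lemma step_self (a : V) : step T p a (p a) = a := by
  rw [step, dif_neg]
  rintro ⟨b, hb, hpb⟩
  have := (hp a).mapsTo hb
  rw [hpb] at this
  exact G.loopless.irrefl _ this

lemma step_adj {a : V} {w : W} (h : G.Adj (p a) w) :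
    T.Adj a (step T p a w) ∧ p (step T p a w) = w := by
  obtain ⟨b, hb, hpb⟩ := (hp a).surjOn h
  have hex : ∃ b, T.Adj a b ∧ p b = w := ⟨b, hb, hpb⟩
  rw [step, dif_pos hex]
  exact hex.choose_spec

lemma step_unique {a b : V} {w : W} (hR : G.Adj (p a) w ∨ p a = w)
    (hb : T.Adj a b ∨ a = b) (hpb : p b = w) : b = step T p a w := by
  rcases hR with hR | hR
  · rcases hb with hb | rfl
    · obtain ⟨hs, hps⟩ := step_adj hp hR
      exact (hp a).injOn hb hs (by rw [hpb, hps])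
    · exact absurd (hpb ▸ hR) (G.loopless.irrefl _)
  · subst hR
    rw [step_self hp]
    rcases hb with hb | rfl
    · have := (hp a).mapsTo hb
      rw [hpb] at this
      exact absurd this (G.loopless.irrefl _)
    · rfl

lemma step_p {a : V} {w : W} (hR : G.Adj (p a) w ∨ p a = w) : p (step T p a w) = w := by
  rcases hR with hR | hR
  · exact (step_adj hp hR).2
  · rw [← hR, step_self hp]

lemma step_rel {a : V} {w : W} (hR : G.Adj (p a) w ∨ p a = w) :
    T.Adj a (step T p a w) ∨ a = step T p a w := by
  rcases hR with hR | hR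
  · exact Or.inl (step_adj hp hR).1
  · exact Or.inr (by rw [← hR, step_self hp])

lemma step_back {a : V} {w : W} (h : G.Adj (p a) w) :
    step T p (step T p a w) (p a) = a := by
  obtain ⟨hs, hps⟩ := step_adj hp h
  exact (step_unique hp (Or.inl (by rw [hps]; exact h.symm)) (Or.inl hs.symm) rfl).symm


omit hp in
lemma six_of_not_inj {W : Type*} {A B C D : W} (τ : (Fin 2 → Bool) → W)
    (eA : τ ![false, false] = A) (eB : τ ![true, false] = B)
    (eC : τ ![false, true] = C) (eD : τ ![true, true] = D)
    (hni : ¬ Function.Injective τ) :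
    A = B ∨ A = C ∨ A = D ∨ B = C ∨ B = D ∨ C = D := by
  by_contra hc
  push_neg at hc
  obtain ⟨n1, n2, n3, n4, n5, n6⟩ := hc
  apply hni
  intro s t hst
  rcases fin2_cases s with rfl | rfl | rfl | rfl <;>
    rcases fin2_cases t with rfl | rfl | rfl | rfl <;>
    simp only [eA, eB, eC, eD] at hst <;>
    first
      | rfl
      | exact absurd hst n1 | exact absurd hst.symm n1
      | exact absurd hst n2 | exact absurd hst.symm n2
      | exact absurd hst n3 | exact absurd hst.symm n3
      | exact absurd hst n4 | exact absurd hst.symm n4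
      | exact absurd hst n5 | exact absurd hst.symm n5
      | exact absurd hst n6 | exact absurd hst.symm n6

set_option maxHeartbeats 1000000 in
lemma square {A B C D : W} (τ : (Fin 2 → Bool) → W)
    (eA : τ ![false, false] = A) (eB : τ ![true, false] = B)
    (eC : τ ![false, true] = C) (eD : τ ![true, true] = D)
    (h1 : G.Adj A B ∨ A = B) (h2 : G.Adj B D ∨ B = D)
    (h3 : G.Adj A C ∨ A = C) (h4 : G.Adj C D ∨ C = D)
    (hni : ¬ Function.Injective τ)
    (hn3 : ¬ ((Set.range τ).ncard = 3 ∧ ∃ s t, (Cube 2).Adj s t ∧ τ s = τ t))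
    (a : V) (ha : p a = A) :
    step T p (step T p a B) D = step T p (step T p a C) D := by
  have h6 := six_of_not_inj τ eA eB eC eD hni
  set b1 := step T p a B with hb1d
  set b2 := step T p a C with hb2d
  have pb1 : p b1 = B := by rw [hb1d]; exact step_p hp (by rw [ha]; exact h1)
  have pb2 : p b2 = C := by rw [hb2d]; exact step_p hp (by rw [ha]; exact h3)
  have back1 : G.Adj A B → step T p b1 A = a := fun h => by
    rw [hb1d, ← ha]; exact step_back hp (by rw [ha]; exact h)
  have back3 : G.Adj A C → step T p b2 A = a := fun h => by
    rw [hb2d, ← ha]; exact step_back hp (by rw [ha]; exact h)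
  rcases h6 with hd | hd | hd | hd | hd | hd
  · -- A = B
    have hb1a : b1 = a := by rw [hb1d, ← hd, ← ha]; exact step_self hp a
    rcases h3 with h3' | h3'
    · rcases h4 with h4' | h4'
      · rcases (show G.Adj A D ∨ A = D by rw [hd]; exact h2) with h2' | h2'
        · refine absurd ⟨?_, ![false, false], ![true, false], adj_ff_tf,
            by rw [eA, eB]; exact hd⟩ hn3
          have hr : Set.range τ = {A, C, D} := by
            rw [range_eq τ, eA, eB, eC, eD, ← hd]
            ext w
            simp only [Set.mem_insert_iff, Set.mem_singleton_iff]
            tauto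
          rw [hr]; exact triple_ncard h3'.ne h2'.ne h4'.ne
        · have hL : step T p b1 D = a := by
            rw [hb1a, ← h2', ← ha]; exact step_self hp a
          have hR : step T p b2 D = a := by rw [← h2']; exact back3 h3'
          rw [hL, hR]
      · -- C = D
        have hR : step T p b2 D = b2 := by rw [← h4', ← pb2]; exact step_self hp b2
        rw [hR, hb1a, hb2d, h4']
    · -- A = C
      have hb2a : b2 = a := by rw [hb2d, ← h3', ← ha]; exact step_self hp a
      rw [hb1a, hb2a]
  · -- A = C
    have hb2a : b2 = a := by rw [hb2d, ← hd, ← ha]; exact step_self hp a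
    rcases h1 with h1' | h1'
    · rcases h2 with h2' | h2'
      · rcases (show G.Adj A D ∨ A = D by rw [hd]; exact h4) with h4' | h4'
        · refine absurd ⟨?_, ![false, false], ![false, true], adj_ff_ft,
            by rw [eA, eC]; exact hd⟩ hn3
          have hr : Set.range τ = {A, B, D} := by
            rw [range_eq τ, eA, eB, eC, eD, ← hd]
            ext w
            simp only [Set.mem_insert_iff, Set.mem_singleton_iff]
            tauto
          rw [hr]; exact triple_ncard h1'.ne h4'.ne h2'.ne
        · have hR : step T p b2 D = a := by
            rw [hb2a, ← h4', ← ha]; exact step_self hp a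
          have hL : step T p b1 D = a := by rw [← h4']; exact back1 h1'
          rw [hL, hR]
      · -- B = D
        have hL : step T p b1 D = b1 := by rw [← h2', ← pb1]; exact step_self hp b1
        rw [hL, hb2a, hb1d, h2']
    · -- A = B
      have hb1a : b1 = a := by rw [hb1d, ← h1', ← ha]; exact step_self hp a
      rw [hb1a, hb2a]
  · -- A = D
    have hL : step T p b1 D = a := by
      rcases h1 with h1' | h1'
      · rw [← hd]; exact back1 h1'
      · have hb1a : b1 = a := by rw [hb1d, ← h1', ← ha]; exact step_self hp a
        rw [hb1a, ← hd, ← ha]; exact step_self hp a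
    have hR : step T p b2 D = a := by
      rcases h3 with h3' | h3'
      · rw [← hd]; exact back3 h3'
      · have hb2a : b2 = a := by rw [hb2d, ← h3', ← ha]; exact step_self hp a
        rw [hb2a, ← hd, ← ha]; exact step_self hp a
    rw [hL, hR]
  · -- B = C
    rw [hb1d, hb2d, hd]
  · -- B = D
    have hL : step T p b1 D = b1 := by rw [← hd, ← pb1]; exact step_self hp b1
    rw [hL]
    rcases h4 with h4' | h4'
    · rcases h3 with h3' | h3'
      · rcases (show G.Adj A D ∨ A = D by rw [← hd]; exact h1) with h1' | h1'
        · refine absurd ⟨?_, ![true, false], ![true, true], adj_tf_tt,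
            by rw [eB, eD]; exact hd⟩ hn3
          have hr : Set.range τ = {A, C, D} := by
            rw [range_eq τ, eA, eB, eC, eD, hd]
            ext w
            simp only [Set.mem_insert_iff, Set.mem_singleton_iff]
            tauto
          rw [hr]; exact triple_ncard h3'.ne h1'.ne h4'.ne
        · have hb1a : b1 = a := by rw [hb1d, hd, ← h1', ← ha]; exact step_self hp a
          rw [hb1a, ← h1']
          exact (back3 h3').symm
      · -- A = C
        have hb2a : b2 = a := by rw [hb2d, ← h3', ← ha]; exact step_self hp a
        rw [hb2a, hb1d, hd]
    · -- C = D
      have hR : step T p b2 D = b2 := by rw [← h4', ← pb2]; exact step_self hp b2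
      rw [hR, hb1d, hb2d, hd, h4']
  · -- C = D
    have hR : step T p b2 D = b2 := by rw [← hd, ← pb2]; exact step_self hp b2
    rw [hR]
    rcases h2 with h2' | h2'
    · rcases h1 with h1' | h1'
      · rcases (show G.Adj A D ∨ A = D by rw [← hd]; exact h3) with h3' | h3'
        · refine absurd ⟨?_, ![false, true], ![true, true], adj_ft_tt,
            by rw [eC, eD]; exact hd⟩ hn3
          have hr : Set.range τ = {A, B, D} := by
            rw [range_eq τ, eA, eB, eC, eD, hd]
            ext w
            simp only [Set.mem_insert_iff, Set.mem_singleton_iff]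
            tauto
          rw [hr]; exact triple_ncard h1'.ne h3'.ne h2'.ne
        · have hL : step T p b1 D = a := by rw [← h3']; exact back1 h1'
          have hb2a : b2 = a := by rw [hb2d, hd, ← h3', ← ha]; exact step_self hp a
          rw [hL, hb2a]
      · -- A = B
        have hb1a : b1 = a := by rw [hb1d, ← h1', ← ha]; exact step_self hp a
        rw [hb1a, hb2d, hd]
    · -- B = D
      have hL : step T p b1 D = b1 := by rw [← h2', ← pb1]; exact step_self hp b1
      rw [hL, hb1d, hb2d, h2', hd]

end
end LiftAux

namespace LiftAux

def wt {n : ℕ} (x : Fin n → Bool) : ℕ := (Finset.univ.filter fun i => x i = true).card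

lemma wt_eq_zero {n : ℕ} {x : Fin n → Bool} (h : wt x = 0) : x = fun _ => false := by
  funext i
  by_contra hi
  have hit : x i = true := by
    cases hxi : x i
    · exact absurd hxi hi
    · rfl
  have : i ∈ Finset.univ.filter fun i => x i = true := by
    simp [hit]
  rw [wt, Finset.card_eq_zero] at h
  rw [h] at this
  exact absurd this (Finset.notMem_empty i)

lemma exists_true_of_wt_succ {n : ℕ} {x : Fin n → Bool} {k : ℕ} (h : wt x = k + 1) :
    ∃ i, x i = true := by
  have : (Finset.univ.filter fun i => x i = true).Nonempty := by
    rw [← Finset.card_pos, ← wt, h]; omega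
  obtain ⟨i, hi⟩ := this
  exact ⟨i, (Finset.mem_filter.mp hi).2⟩

lemma wt_update_false {n : ℕ} {x : Fin n → Bool} {i : Fin n} (hi : x i = true) {k : ℕ}
    (h : wt x = k + 1) : wt (Function.update x i false) = k := by
  have hset : (Finset.univ.filter fun j => Function.update x i false j = true)
      = (Finset.univ.filter fun j => x j = true).erase i := by
    ext j
    simp only [Finset.mem_filter, Finset.mem_univ, true_and, Finset.mem_erase,
      Function.update_apply]
    by_cases hj : j = i
    · subst hj; simp
    · simp [hj]
  rw [wt, hset, Finset.card_erase_of_mem (by simp [hi]), ← wt, h]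
  omega

lemma cube_adj_update_false {n : ℕ} {x : Fin n → Bool} {i : Fin n} (hi : x i = true) :
    (Cube n).Adj (Function.update x i false) x :=
  cube_adj_of i (by simp [hi]) (fun j hj => Function.update_of_ne hj _ _)

lemma cube_adj_cons {n : ℕ} (b : Bool) {y y' : Fin n → Bool} (h : (Cube n).Adj y y') :
    (Cube (n + 1)).Adj (Fin.cons b y) (Fin.cons b y') := by
  obtain ⟨i, hi, -⟩ := id h
  refine cube_adj_of i.succ (by simpa [Fin.cons_succ] using hi) (fun j hj => ?_)
  rcases Fin.eq_zero_or_eq_succ j with rfl | ⟨m, rfl⟩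
  · simp
  · simp only [Fin.cons_succ]
    exact cube_adj_ne h hi m (fun hmi => hj (by rw [hmi]))

lemma cube_adj_cons_bool {n : ℕ} (y : Fin n → Bool) :
    (Cube (n + 1)).Adj (Fin.cons false y) (Fin.cons true y) := by
  refine cube_adj_of 0 (by simp) (fun j hj => ?_)
  rcases Fin.eq_zero_or_eq_succ j with rfl | ⟨m, rfl⟩
  · exact absurd rfl hj
  · simp [Fin.cons_succ]

lemma cons_false_const {n : ℕ} :
    (Fin.cons false (fun _ => false) : Fin (n + 1) → Bool) = fun _ => false := by
  funext i
  refine Fin.cases ?_ (fun m => ?_) i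
  · simp
  · simp [Fin.cons_succ]

def FaceCond {W : Type*} {n : ℕ} (σ : (Fin n → Bool) → W) : Prop :=
  ∀ (j k : Fin n), j ≠ k → ∀ c : Fin n → Bool,
    ∀ τ : (Fin 2 → Bool) → W,
      (τ = fun s => σ fun m => if m = j then s 0 else if m = k then s 1 else c m) →
      ¬ Function.Injective τ ∧
      ¬ ((Set.range τ).ncard = 3 ∧ ∃ s t, (Cube 2).Adj s t ∧ τ s = τ t)

lemma faceCond_cons {W : Type*} {n : ℕ} {σ : (Fin (n + 1) → Bool) → W} (b : Bool)
    (hf : FaceCond σ) : FaceCond (fun y => σ (Fin.cons b y)) := by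
  intro j k hjk c τ hτ
  refine hf j.succ k.succ (fun h => hjk (Fin.succ_injective _ h)) (Fin.cons b c) τ ?_
  rw [hτ]
  funext s
  change σ _ = σ _
  congr 1
  funext m
  refine Fin.cases ?_ (fun m' => ?_) m
  · simp [(Fin.succ_ne_zero j).symm, (Fin.succ_ne_zero k).symm]
  · simp [Fin.cons_succ, Fin.succ_inj]


end LiftAux
namespace LiftAux
section
variable {V W : Type*} {G : SimpleGraph W} {T : SimpleGraph V} {p : V → W}
variable (hp : IsGraphCovering T G p)
include hp

lemma lift_unique {n : ℕ} {σ : (Fin n → Bool) → W} (hσ : IsGraphMap (Cube n) G σ)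
    {σt σt' : (Fin n → Bool) → V}
    (hm : IsGraphMap (Cube n) T σt) (hl : p ∘ σt = σ)
    (hm' : IsGraphMap (Cube n) T σt') (hl' : p ∘ σt' = σ)
    (h0 : σt (fun _ => false) = σt' (fun _ => false)) : σt = σt' := by
  have key : ∀ (k : ℕ) (x : Fin n → Bool), wt x = k → σt x = σt' x := by
    intro k
    induction k with
    | zero =>
      intro x hx
      rw [wt_eq_zero hx]
      exact h0
    | succ k ihk =>
      intro x hx
      obtain ⟨i, hi⟩ := exists_true_of_wt_succ hx
      have hadj : (Cube n).Adj (Function.update x i false) x := cube_adj_update_false hi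
      have hpx : p (σt x) = σ x := congrFun hl x
      have hpx' : p (σt' x) = σ x := congrFun hl' x
      have hpy : p (σt (Function.update x i false)) = σ (Function.update x i false) :=
        congrFun hl _
      have hpy' : p (σt' (Function.update x i false)) = σ (Function.update x i false) :=
        congrFun hl' _
      have e1 : σt x = step T p (σt (Function.update x i false)) (σ x) :=
        step_unique hp (by rw [hpy]; exact hσ hadj) (hm hadj) hpx
      have e2 : σt' x = step T p (σt' (Function.update x i false)) (σ x) :=
        step_unique hp (by rw [hpy']; exact hσ hadj) (hm' hadj) hpx'
      rw [e1, e2, ihk _ (wt_update_false hi hx)]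
  funext t
  exact key (wt t) t rfl

lemma exists_lift : ∀ (n : ℕ) (σ : (Fin n → Bool) → W),
    IsGraphMap (Cube n) G σ → FaceCond σ →
    ∀ q : V, p q = σ (fun _ => false) →
    ∃ σt : (Fin n → Bool) → V,
      IsGraphMap (Cube n) T σt ∧ p ∘ σt = σ ∧ σt (fun _ => false) = q := by
  intro n
  induction n with
  | zero =>
    intro σ hσ hf q hq
    have ht : ∀ t : Fin 0 → Bool, t = fun _ => false := fun t => funext fun i => i.elim0
    refine ⟨fun _ => q, ?_, ?_, rfl⟩
    · rintro u v ⟨i, -, -⟩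
      exact i.elim0
    · funext t
      show p q = σ t
      rw [hq, ht t]
  | succ n ih =>
    intro σ hσ hf q hq
    obtain ⟨σt0, hm0, hl0, h00⟩ := ih (fun y => σ (Fin.cons false y))
      (fun u v h => hσ (cube_adj_cons false h)) (faceCond_cons false hf) q
      (show p q = σ (Fin.cons false fun _ => false) by rw [hq, cons_false_const])
    have hR0 : G.Adj (p q) (σ (Fin.cons true fun _ => false))
        ∨ p q = σ (Fin.cons true fun _ => false) := by
      rw [hq, ← cons_false_const]
      exact hσ (cube_adj_cons_bool _)
    obtain ⟨σt1, hm1, hl1, h10⟩ := ih (fun y => σ (Fin.cons true y))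
      (fun u v h => hσ (cube_adj_cons true h)) (faceCond_cons true hf)
      (step T p q (σ (Fin.cons true fun _ => false))) (step_p hp hR0)
    have key : ∀ (k : ℕ) (x : Fin n → Bool), wt x = k →
        σt1 x = step T p (σt0 x) (σ (Fin.cons true x)) := by
      intro k
      induction k with
      | zero =>
        intro x hx
        rw [wt_eq_zero hx, h00, h10]
      | succ k ihk =>
        intro x hx
        obtain ⟨i, hi⟩ := exists_true_of_wt_succ hx
        set x' : Fin n → Bool := Function.update x i false with hx'd
        have hadj : (Cube n).Adj x' x := cube_adj_update_false hi
        have hupf : Function.update x' i false = x' := by rw [hx'd, Function.update_idem]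
        have hupt : Function.update x' i true = x := by
          rw [hx'd, Function.update_idem, ← hi, Function.update_eq_self]
        obtain ⟨hni, hn3⟩ := hf 0 i.succ (Fin.succ_ne_zero i).symm (Fin.cons false x') _ rfl
        have hcor : ∀ b0 b1 : Bool,
            (fun s : Fin 2 → Bool => σ fun m => if m = 0 then s 0
              else if m = i.succ then s 1 else (Fin.cons false x' : Fin (n+1) → Bool) m) ![b0, b1]
            = σ (Fin.cons b0 (Function.update x' i b1)) := by
          intro b0 b1
          show σ _ = σ _
          congr 1
          funext m
          rcases Fin.eq_zero_or_eq_succ m with rfl | ⟨m', rfl⟩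
          · simp
          · by_cases hmi : m' = i
            · subst hmi
              simp [Fin.succ_ne_zero, Fin.cons_succ]
            · simp [Fin.succ_ne_zero, Fin.cons_succ, Fin.succ_inj, hmi,
                Function.update_of_ne hmi]
        have eA := (hcor false false).trans (by rw [hupf])
        have eB := (hcor true false).trans (by rw [hupf])
        have eC := (hcor false true).trans (by rw [hupt])
        have eD := (hcor true true).trans (by rw [hupt])
        have hA : p (σt0 x') = σ (Fin.cons false x') := congrFun hl0 x'
        have hB : p (σt1 x') = σ (Fin.cons true x') := congrFun hl1 x'
        have hsq := square hp _ eA eB eC eD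
          (hσ (cube_adj_cons_bool x')) (hσ (cube_adj_cons true hadj))
          (hσ (cube_adj_cons false hadj)) (hσ (cube_adj_cons_bool x)) hni hn3 (σt0 x') hA
        have e0 : σt0 x = step T p (σt0 x') (σ (Fin.cons false x)) :=
          step_unique hp (by rw [hA]; exact hσ (cube_adj_cons false hadj)) (hm0 hadj)
            (congrFun hl0 x)
        have e1 : σt1 x = step T p (σt1 x') (σ (Fin.cons true x)) :=
          step_unique hp (by rw [hB]; exact hσ (cube_adj_cons true hadj)) (hm1 hadj)
            (congrFun hl1 x)
        rw [e1, ihk x' (wt_update_false hi hx), hsq, ← e0]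
    refine ⟨fun t => cond (t 0) (σt1 (Fin.tail t)) (σt0 (Fin.tail t)), ?_, ?_, ?_⟩
    · intro u v hadj
      obtain ⟨iu, hiu, -⟩ := id hadj
      rcases Fin.eq_zero_or_eq_succ iu with rfl | ⟨i', rfl⟩
      · have htails : Fin.tail u = Fin.tail v :=
          funext fun m => cube_adj_ne hadj hiu m.succ (Fin.succ_ne_zero m)
        have hA : p (σt0 (Fin.tail u)) = σ (Fin.cons false (Fin.tail u)) := congrFun hl0 _
        have hrel : T.Adj (σt0 (Fin.tail u)) (σt1 (Fin.tail u))
            ∨ σt0 (Fin.tail u) = σt1 (Fin.tail u) := by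
          rw [key (wt (Fin.tail u)) (Fin.tail u) rfl]
          exact step_rel hp (by rw [hA]; exact hσ (cube_adj_cons_bool _))
        cases hu : u 0 <;> cases hv : v 0
        · exact absurd (hu.trans hv.symm) hiu
        · simp only [hu, hv, Bool.cond_false, Bool.cond_true]
          rw [← htails]
          exact hrel
        · simp only [hu, hv, Bool.cond_false, Bool.cond_true]
          rw [← htails]
          rcases hrel with h | h
          · exact Or.inl h.symm
          · exact Or.inr h.symm
        · exact absurd (hu.trans hv.symm) hiu
      · have h00' : u 0 = v 0 := cube_adj_ne hadj hiu 0 (Ne.symm (Fin.succ_ne_zero i'))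
        have hadjT : (Cube n).Adj (Fin.tail u) (Fin.tail v) := by
          refine cube_adj_of i' hiu (fun m hm => ?_)
          exact cube_adj_ne hadj hiu m.succ (fun hh => hm (Fin.succ_injective _ hh))
        cases hu : u 0
        · have hv : v 0 = false := by rw [← h00', hu]
          simp only [hu, hv, Bool.cond_false]
          exact hm0 hadjT
        · have hv : v 0 = true := by rw [← h00', hu]
          simp only [hu, hv, Bool.cond_true]
          exact hm1 hadjT
    · funext t
      show p (cond (t 0) (σt1 (Fin.tail t)) (σt0 (Fin.tail t))) = σ t
      cases h : t 0
      · rw [Bool.cond_false]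
        refine (congrFun hl0 (Fin.tail t)).trans ?_
        show σ (Fin.cons false (Fin.tail t)) = σ t
        rw [← h, Fin.cons_self_tail]
      · rw [Bool.cond_true]
        refine (congrFun hl1 (Fin.tail t)).trans ?_
        show σ (Fin.cons true (Fin.tail t)) = σ t
        rw [← h, Fin.cons_self_tail]
    · show σt0 (Fin.tail fun _ => false) = q
      exact h00

end
end LiftAux

/-- let `G` be a path-connected graph and `p : T → G` its tree covering.
If `σ : I^n → G` is a singular cube such that the image of each of its 2-dimensional
faces is neither a 3-cycle nor a 4-cycle, then for every lift `q` of `σ(0)` there is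
a unique lift `σ̃ : I^n → T` of `σ` with `σ̃(0) = q`. -/
theorem unique_lift_of_no_small_cycles {V W : Type*}
    (G : SimpleGraph W) (T : SimpleGraph V) (p : V → W)
    (hG : G.Connected) (hT : T.IsTree) (hp : IsGraphCovering T G p)
    {n : ℕ} (σ : (Fin n → Bool) → W) (hσ : IsGraphMap (Cube n) G σ)
    (hfaces : ∀ (j k : Fin n), j ≠ k → ∀ c : Fin n → Bool,
      -- `τ` is the 2-dimensional face of `σ` at coordinates `j, k`, with the other
      -- coordinates fixed according to `c`
      ∀ τ : (Fin 2 → Bool) → W,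
        (τ = fun s => σ fun m => if m = j then s 0 else if m = k then s 1 else c m) →
        -- the image of `τ` is not a 4-cycle:
        ¬ Function.Injective τ ∧
        -- the image of `τ` is not a 3-cycle:
        ¬ ((Set.range τ).ncard = 3 ∧ ∃ s t, (Cube 2).Adj s t ∧ τ s = τ t))
    (q : V) (hq : p q = σ (fun _ => false)) :
    ∃! σt : (Fin n → Bool) → V,
      IsGraphMap (Cube n) T σt ∧ p ∘ σt = σ ∧ σt (fun _ => false) = q := by
  obtain ⟨σt, hm, hl, h0⟩ := LiftAux.exists_lift hp n σ hσ hfaces q hq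
  refine ⟨σt, ⟨hm, hl, h0⟩, ?_⟩
  rintro σt' ⟨hm', hl', h0'⟩
  exact LiftAux.lift_unique hp hσ hm' hl' hm hl (h0'.trans h0.symm)
end

section
/- Let σ : I^n → G be a singular n-cube and 1 ≤ i ≤ n. Define the singular (n+1)-cube ρ : I^{n+1} → G by ρ(t_1,…,t_{n+1}) = σ(t_1,…,t_{i-1}, t_{i+1},…,t_{n+1}) if t_i = 0, and ρ(t_1,…,t_{n+1}) = σ(t_1,…,t_{i-1}, 0, t_{i+2},…,t_{n+1}) if t_i = 1. Then ρ is a graph map, f_i^- ρ = σ, f_{i+1}^+ ρ = σ ∘ T_i, the faces f_i^+ ρ and f_{i+1}^- ρ are degenerate, and every other face f_j^± ρ (j ∉ {i, i+1}) is not injective. -/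
private lemma succAbove_cs_of_ne {n : ℕ} (i : Fin (n + 1)) {k : Fin (n + 1)} (hk : k ≠ i) :
    i.castSucc.succAbove k = i.succ.succAbove k := by
  rcases hk.lt_or_gt with h | h
  · rw [Fin.succAbove_castSucc_of_lt _ _ h, Fin.succAbove_succ_of_le _ _ h.le]
  · rw [Fin.succAbove_castSucc_of_le _ _ h.le, Fin.succAbove_succ_of_lt _ _ h]

/-- Composing `insertNth` at `i.succ` with the hole-at-`i.castSucc` embedding is `update`. -/
private lemma compA {n : ℕ} (i : Fin (n + 1)) (b : Bool) (t : Fin (n + 1) → Bool) :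
    (i.succ.insertNth b t) ∘ i.castSucc.succAbove = Function.update t i b := by
  funext k
  rcases eq_or_ne k i with rfl | hk
  · simp [Function.comp]
  · simp only [Function.comp_apply, succAbove_cs_of_ne i hk,
      Fin.insertNth_apply_succAbove, Function.update_of_ne hk]

private lemma insertNth_update {n : ℕ} (j : Fin (n + 2)) (b : Bool) (t : Fin (n + 1) → Bool)
    (k : Fin (n + 1)) (x : Bool) :
    j.insertNth b (Function.update t k x)
      = Function.update (α := Fin (n + 2)) (β := fun _ => Bool) (j.insertNth b t)
        (j.succAbove k) x := by
  funext m
  rcases eq_or_ne m (j.succAbove k) with rfl | hm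
  · simp
  · rw [Function.update_of_ne hm]
    rcases eq_or_ne m j with rfl | hmj
    · simp
    · obtain ⟨l, rfl⟩ := Fin.exists_succAbove_eq hmj
      have hlk : l ≠ k := fun h => hm (by rw [h])
      simp [Function.update_of_ne hlk]

private lemma cube_adj_update {m : ℕ} (v : Fin m → Bool) (k : Fin m) (c : Bool) (h : v k ≠ c) :
    (Cube m).Adj v (Function.update v k c) := by
  refine ⟨k, by simpa using h, fun l hl => ?_⟩
  by_contra hlk
  simp [Function.update_of_ne hlk] at hl

/-- the prism `ρ` witnessing that `σ` and `σ ∘ T_i` are homologous: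
`ρ` is a graph map, `f_i^- ρ = σ`, `f_{i+1}^+ ρ = σ ∘ T_i`, the faces `f_i^+ ρ` and
`f_{i+1}^- ρ` are degenerate, and every other face of `ρ` is noninjective. -/
theorem prism_faces {V : Type*} (G : SimpleGraph V) {n : ℕ}
    (σ : (Fin (n + 1) → Bool) → V) (hσ : IsGraphMap (Cube (n + 1)) G σ)
    (i : Fin (n + 1)) (ρ : (Fin (n + 2) → Bool) → V)
    (hρ : ∀ t, ρ t =
      if t i.castSucc = false then σ (t ∘ i.castSucc.succAbove)
      else σ (Function.update (t ∘ i.castSucc.succAbove) i false)) :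
    IsGraphMap (Cube (n + 2)) G ρ ∧
    face i.castSucc false ρ = σ ∧
    face i.succ true ρ = σ ∘ reflT i ∧
    IsDegenerate (face i.castSucc true ρ) ∧
    IsDegenerate (face i.succ false ρ) ∧
    ∀ j : Fin (n + 2), j ≠ i.castSucc → j ≠ i.succ → ∀ b : Bool,
      ¬ Function.Injective (face j b ρ) := by
  have hcs_val : ∀ (b : Bool) (t : Fin (n + 1) → Bool),
      Fin.insertNth (α := fun _ => Bool) i.succ b t i.castSucc = t i := by
    intro b t
    rw [← Fin.succAbove_succ_self i, Fin.insertNth_apply_succAbove]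
  refine ⟨?_, ?_, ?_, ?_, ?_, ?_⟩
  · -- graph map
    rintro t t' ⟨j, hj, hu⟩
    have heq : ∀ m, m ≠ j → t m = t' m := fun m hm => by
      by_contra h; exact hm (hu m h)
    rcases eq_or_ne j i.castSucc with rfl | hji
    · -- the changed coordinate is i.castSucc
      have hss : t ∘ i.castSucc.succAbove = t' ∘ i.castSucc.succAbove := by
        funext k; exact heq _ (Fin.succAbove_ne _ _)
      have H : ∀ a b : Fin (n + 2) → Bool,
          a ∘ i.castSucc.succAbove = b ∘ i.castSucc.succAbove →
          a i.castSucc = false → b i.castSucc = true →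
          G.Adj (ρ a) (ρ b) ∨ ρ a = ρ b := by
        intro a b hab ha hb
        rw [hρ a, hρ b, if_pos ha, if_neg (by simp [hb]), ← hab]
        set v := a ∘ i.castSucc.succAbove with hv
        cases hvi : v i with
        | false =>
          right
          rw [← hvi, Function.update_eq_self]
        | true => exact hσ (cube_adj_update v i false (by simp [hvi]))
      cases ht : t i.castSucc with
      | false =>
        have ht' : t' i.castSucc = true := by
          rw [ht] at hj
          cases h : t' i.castSucc
          · exact absurd h.symm hj
          · rfl
        exact H t t' hss ht ht'
      | true =>
        have ht' : t' i.castSucc = false := by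
          rw [ht] at hj
          cases h : t' i.castSucc
          · rfl
          · exact absurd h.symm hj
        exact (H t' t hss.symm ht' ht).imp (fun h => h.symm) (fun h => h.symm)
    · -- the changed coordinate is some other one
      obtain ⟨k, hk⟩ := Fin.exists_succAbove_eq hji
      have hc : t i.castSucc = t' i.castSucc := heq _ (Ne.symm hji)
      have hd : ∀ m, m ≠ k → (t ∘ i.castSucc.succAbove) m = (t' ∘ i.castSucc.succAbove) m := by
        intro m hm
        exact heq _ (fun h => hm (Fin.succAbove_right_injective (by rw [h, hk])))
      have hdk : (t ∘ i.castSucc.succAbove) k ≠ (t' ∘ i.castSucc.succAbove) k := by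
        show t (i.castSucc.succAbove k) ≠ t' (i.castSucc.succAbove k)
        rw [hk]; exact hj
      rw [hρ t, hρ t', hc]
      cases hcv : t' i.castSucc with
      | false =>
        rw [if_pos rfl, if_pos rfl]
        exact hσ ⟨k, hdk, fun m hm => by by_contra hmk; exact hm (hd m hmk)⟩
      | true =>
        rw [if_neg (by simp), if_neg (by simp)]
        rcases eq_or_ne k i with rfl | hki
        · right
          congr 1
          funext m
          rcases eq_or_ne m k with rfl | hm
          · simp
          · rw [Function.update_of_ne hm, Function.update_of_ne hm]
            exact hd m hm
        · refine hσ ⟨k, ?_, ?_⟩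
          · simp only [Function.update_of_ne hki]; exact hdk
          · intro m hm
            have hmi : m ≠ i := by
              rintro rfl
              simp at hm
            simp only [Function.update_of_ne hmi] at hm
            by_contra hmk
            exact hm (hd m hmk)
  · -- front face at i.castSucc is σ
    funext t
    show ρ (i.castSucc.insertNth false t) = σ t
    rw [hρ, if_pos (Fin.insertNth_apply_same _ _ _), Fin.insertNth_comp_succAbove]
  · -- back face at i.succ is σ ∘ reflT i
    funext t
    show ρ (i.succ.insertNth true t) = σ (reflT i t)
    rw [hρ, hcs_val, compA]
    cases ht : t i with
    | false =>
      rw [if_pos rfl]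
      simp [reflT, ht]
    | true =>
      rw [if_neg (by simp), Function.update_idem]
      simp [reflT, ht]
  · -- back face at i.castSucc is degenerate
    refine ⟨i, fun t => ?_⟩
    show ρ (i.castSucc.insertNth true t) = ρ (i.castSucc.insertNth true (reflT i t))
    rw [hρ, hρ, if_neg (by simp), if_neg (by simp),
      Fin.insertNth_comp_succAbove, Fin.insertNth_comp_succAbove]
    unfold reflT
    rw [Function.update_idem]
  · -- front face at i.succ is degenerate
    have key : ∀ t, ρ (i.succ.insertNth false t) = σ (Function.update t i false) := by
      intro t
      rw [hρ, hcs_val, compA]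
      cases ht : t i with
      | false =>
        rw [if_pos rfl, ← ht, Function.update_eq_self]
      | true =>
        rw [if_neg (by simp), Function.update_idem]
    refine ⟨i, fun t => ?_⟩
    show ρ (i.succ.insertNth false t) = ρ (i.succ.insertNth false (reflT i t))
    rw [key, key]
    unfold reflT
    rw [Function.update_idem]
  · -- all other faces are noninjective
    intro j hj1 hj2 b hInj
    obtain ⟨k₀, hk₀⟩ := Fin.exists_succAbove_eq (Ne.symm hj1)
    obtain ⟨k₁, hk₁⟩ := Fin.exists_succAbove_eq (Ne.symm hj2)
    have hk01 : k₀ ≠ k₁ := by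
      rintro rfl
      rw [hk₀] at hk₁
      exact (Fin.castSucc_lt_succ : i.castSucc < i.succ).ne hk₁
    set t : Fin (n + 1) → Bool := fun _ => true with htdef
    set t' := Function.update t k₁ false with ht'def
    have hne : t ≠ t' := by
      intro h
      have := congrFun h k₁
      simp [htdef, ht'def] at this
    apply hne
    apply hInj
    show ρ (j.insertNth b t) = ρ (j.insertNth b t')
    have hu' : j.insertNth b t'
        = Function.update (α := Fin (n + 2)) (β := fun _ => Bool) (j.insertNth b t)
          i.succ false := by
      rw [ht'def, insertNth_update, hk₁]
    have hv : Fin.insertNth (α := fun _ => Bool) j b t i.castSucc = true := by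
      rw [← hk₀, Fin.insertNth_apply_succAbove]
    have hcs2 : Function.update (α := Fin (n + 2)) (β := fun _ => Bool) (j.insertNth b t)
        i.succ false i.castSucc = true := by
      rw [Function.update_of_ne ((Fin.castSucc_lt_succ : i.castSucc < i.succ).ne), hv]
    rw [hρ, hρ, hu', if_neg (by simp [hv]), if_neg (by simp [hcs2])]
    congr 1
    have : Function.update (α := Fin (n + 2)) (β := fun _ => Bool) (j.insertNth b t)
          i.succ false ∘ i.castSucc.succAbove
        = Function.update ((j.insertNth b t) ∘ i.castSucc.succAbove) i false := by
      rw [← Fin.succAbove_castSucc_self i]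
      exact Function.update_comp_eq_of_injective _ Fin.succAbove_right_injective _ _
    rw [this, Function.update_idem]
end

section
/- Let σ and γ be injective graph maps I^n → G with the same image equal to a rigid n-cube Q (an induced subgraph of G isomorphic to I^n), such that for every vertex t of I^n, σ(t) equals γ(t) or σ(t) is adjacent to γ(t) in G. Then either σ = γ, or γ = σ ∘ T_k for some reflection T_k, or γ = σ ∘ T_i ∘ T_{i,j} for some rotation (i.e., σ and γ differ by a reflection or a quarter-turn rotation of I^n). -/
section FRhelpers
variable {n : ℕ}

lemma reflT_same (i : Fin n) (t : Fin n → Bool) : reflT i t i = !t i := by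
  simp [reflT]

lemma reflT_other {i k : Fin n} (h : k ≠ i) (t : Fin n → Bool) : reflT i t k = t k := by
  simp [reflT, Function.update_of_ne h]

lemma reflT_invol (i : Fin n) (t : Fin n → Bool) : reflT i (reflT i t) = t := by
  funext k
  rcases eq_or_ne k i with rfl | h
  · rw [reflT_same, reflT_same, Bool.not_not]
  · rw [reflT_other h, reflT_other h]

lemma reflT_comm (i j : Fin n) (t : Fin n → Bool) :
    reflT i (reflT j t) = reflT j (reflT i t) := by
  rcases eq_or_ne i j with rfl | hij
  · rfl
  funext k
  rcases eq_or_ne k i with rfl | hki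
  · rw [reflT_same, reflT_other hij, reflT_other hij, reflT_same]
  rcases eq_or_ne k j with rfl | hkj
  · rw [reflT_other hij.symm, reflT_same, reflT_same, reflT_other hij.symm]
  · rw [reflT_other hki, reflT_other hkj, reflT_other hkj, reflT_other hki]

lemma reflT_ne (i : Fin n) (t : Fin n → Bool) : reflT i t ≠ t := by
  intro h
  have := congrFun h i
  rw [reflT_same] at this
  simp at this

lemma cube_adj_iff {s t : Fin n → Bool} : (Cube n).Adj s t ↔ ∃ i, t = reflT i s := by
  constructor
  · rintro ⟨i, hi, hu⟩
    refine ⟨i, funext fun k => ?_⟩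
    rcases eq_or_ne k i with rfl | h
    · rw [reflT_same]
      revert hi
      cases s k <;> cases t k <;> simp
    · rw [reflT_other h]
      by_contra hne
      exact h (hu k fun hc => hne hc.symm)
  · rintro ⟨i, rfl⟩
    refine ⟨i, show s i ≠ reflT i s i from ?_, fun k hk => ?_⟩
    · rw [reflT_same]; cases s i <;> simp
    · replace hk : s k ≠ reflT i s k := hk
      by_contra h
      rw [reflT_other h] at hk
      exact hk rfl

lemma cube_adj_reflT (k : Fin n) (t : Fin n → Bool) : (Cube n).Adj t (reflT k t) :=
  cube_adj_iff.mpr ⟨k, rfl⟩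

lemma swapT_eq_self {i j : Fin n} {t : Fin n → Bool} (h : t i = t j) : swapT i j t = t := by
  funext k
  simp only [swapT, Function.comp_apply]
  rcases eq_or_ne k i with rfl | hki
  · rw [Equiv.swap_apply_left]; exact h.symm
  rcases eq_or_ne k j with rfl | hkj
  · rw [Equiv.swap_apply_right]; exact h
  · rw [Equiv.swap_apply_of_ne_of_ne hki hkj]

lemma swapT_eq_reflT {i j : Fin n} (hij : i ≠ j) {t : Fin n → Bool} (h : t i ≠ t j) :
    swapT i j t = reflT i (reflT j t) := by
  have hb : ∀ x y : Bool, x ≠ y → y = !x := by decide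
  funext k
  simp only [swapT, Function.comp_apply]
  rcases eq_or_ne k i with rfl | hki
  · rw [Equiv.swap_apply_left, reflT_same, reflT_other hij, ← hb _ _ h]
  rcases eq_or_ne k j with rfl | hkj
  · rw [Equiv.swap_apply_right, reflT_other hij.symm, reflT_same]
    exact (hb _ _ h).symm ▸ (by cases t i <;> simp)
  · rw [Equiv.swap_apply_of_ne_of_ne hki hkj, reflT_other hki, reflT_other hkj]

lemma cube_conn (P : (Fin n → Bool) → Prop) (t₀ : Fin n → Bool)
    (h0 : P t₀) (hstep : ∀ v k, P v → P (reflT k v)) : ∀ v, P v := by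
  have key : ∀ N (v : Fin n → Bool),
      (Finset.univ.filter fun j => v j ≠ t₀ j).card = N → P v := by
    intro N
    induction N with
    | zero =>
      intro v hv
      have hveq : v = t₀ := by
        funext j
        by_contra h
        have hj : j ∈ Finset.univ.filter fun j => v j ≠ t₀ j := by
          simp [h]
        rw [Finset.card_eq_zero] at hv
        rw [hv] at hj
        exact absurd hj (Finset.notMem_empty j)
      exact hveq ▸ h0
    | succ N ih =>
      intro v hv
      have hne : (Finset.univ.filter fun j => v j ≠ t₀ j).Nonempty := by
        rw [← Finset.card_pos, hv]; omega
      obtain ⟨j, hj⟩ := hne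
      simp only [Finset.mem_filter, Finset.mem_univ, true_and] at hj
      have ht : t₀ j = !v j := by
        revert hj; cases v j <;> cases t₀ j <;> simp
      have hset : (Finset.univ.filter fun k => reflT j v k ≠ t₀ k)
          = (Finset.univ.filter fun k => v k ≠ t₀ k).erase j := by
        ext k
        simp only [Finset.mem_filter, Finset.mem_erase, Finset.mem_univ, true_and]
        rcases eq_or_ne k j with rfl | h
        · simp [reflT_same, ht]
        · simp [reflT_other h, h]
      have hv' : (Finset.univ.filter fun k => reflT j v k ≠ t₀ k).card = N := by
        have hmem : j ∈ Finset.univ.filter fun k => v k ≠ t₀ k := by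
          simp only [Finset.mem_filter, Finset.mem_univ, true_and]
          exact hj
        rw [hset, Finset.card_erase_of_mem hmem, hv]
        omega
      have hP := hstep _ j (ih (reflT j v) hv')
      rwa [reflT_invol] at hP
  intro v
  exact key _ v rfl

theorem cube_core (ψ : (Fin n → Bool) → (Fin n → Bool))
    (hinj : Function.Injective ψ)
    (hadj : ∀ s t, (Cube n).Adj s t → (Cube n).Adj (ψ s) (ψ t))
    (hcl : ∀ t, ψ t = t ∨ (Cube n).Adj t (ψ t)) :
    (∀ t, ψ t = t) ∨ (∃ k, ∀ t, ψ t = reflT k t) ∨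
      (∃ i j, i ≠ j ∧ ∀ t, ψ t = reflT i (swapT i j t)) := by
  by_cases hfix : ∃ t, ψ t = t
  · -- identity case
    left
    obtain ⟨t₀, h0⟩ := hfix
    refine cube_conn (fun v => ψ v = v) t₀ h0 ?_
    intro v k hv
    rcases hcl (reflT k v) with h | h
    · exact h
    · exfalso
      obtain ⟨l, hl⟩ := cube_adj_iff.mp h
      have h2 := hadj v (reflT k v) (cube_adj_reflT k v)
      rw [hv, hl] at h2
      obtain ⟨i, hi⟩ := cube_adj_iff.mp h2
      rcases eq_or_ne l k with rfl | hlk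
      · rw [reflT_invol] at hi
        exact reflT_ne i v hi.symm
      rcases eq_or_ne i k with rfl | hik
      · have el := congrFun hi l
        rw [reflT_same, reflT_other hlk] at el
        simp at el
      · have ek := congrFun hi k
        rw [reflT_other (Ne.symm hlk), reflT_same, reflT_other (Ne.symm hik)] at ek
        simp at ek
  · push_neg at hfix
    have hm : ∀ t, ∃ k, ψ t = reflT k t := fun t =>
      cube_adj_iff.mp ((hcl t).resolve_left (hfix t))
    choose m hms using hm
    -- constraint C from adjacency preservation
    have C : ∀ t k, m (reflT k t) = m t ∨ m (reflT k t) = k ∨ m t = k := by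
      intro t k
      by_contra hcon
      push_neg at hcon
      obtain ⟨h1, h2, h3⟩ := hcon
      have hadj' := hadj t (reflT k t) (cube_adj_reflT k t)
      rw [hms t, hms (reflT k t)] at hadj'
      obtain ⟨i, hi, hu⟩ := hadj'
      have da : reflT (m t) t (m t) ≠ reflT (m (reflT k t)) (reflT k t) (m t) := by
        rw [reflT_same, reflT_other (Ne.symm h1), reflT_other h3]
        cases t (m t) <;> simp
      have dk : reflT (m t) t k ≠ reflT (m (reflT k t)) (reflT k t) k := by
        rw [reflT_other (Ne.symm h3), reflT_other (Ne.symm h2), reflT_same]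
        cases t k <;> simp
      exact h3 ((hu _ da).trans (hu _ dk).symm)
    -- constraint I from injectivity
    have I : ∀ (t : Fin n → Bool) (a b : Fin n), a ≠ b → m t = a →
        m (reflT b (reflT a t)) = b → False := by
      intro t a b hab h1 h2
      have e1 : ψ (reflT b (reflT a t)) = reflT a t := by
        rw [hms, h2, reflT_invol]
      have e2 : ψ t = reflT a t := by rw [hms, h1]
      have heq := hinj (e1.trans e2.symm)
      have := congrFun heq a
      rw [reflT_other hab, reflT_same] at this
      simp at this
    by_cases hE : ∃ t, m (reflT (m t) t) = m t
    · -- reflection case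
      obtain ⟨t₀, hE0⟩ := hE
      right; left
      refine ⟨m t₀, ?_⟩
      have key : ∀ v, m v = m t₀ ∧ m (reflT (m t₀) v) = m t₀ := by
        refine cube_conn _ t₀ ⟨rfl, hE0⟩ ?_
        intro v k hv
        obtain ⟨h1, h2⟩ := hv
        rcases eq_or_ne k (m t₀) with rfl | hka
        · exact ⟨h2, by rwa [reflT_invol]⟩
        constructor
        · rcases C v k with h | h | h
          · rw [h, h1]
          · exfalso
            refine I (reflT k v) k (m t₀) hka h ?_
            rw [reflT_invol]
            exact h2
          · exact absurd (h.symm.trans h1) hka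
        · rw [reflT_comm]
          rcases C (reflT (m t₀) v) k with h | h | h
          · rw [h, h2]
          · exfalso
            refine I (reflT k (reflT (m t₀) v)) k (m t₀) hka h ?_
            rw [reflT_invol, reflT_invol]
            exact h1
          · exact absurd (h.symm.trans h2) hka
      intro t
      rw [hms t, (key t).1]
    · -- quarter-turn case
      push_neg at hE
      set u : Fin n → Bool := fun _ => false with hudef
      set a := m u with ha
      set j := m (reflT a u) with hj
      have hja : j ≠ a := hE u
      have hb2 : ∀ x : Bool, (!x) ≠ x := by decide
      have hb3 : ∀ x y : Bool, x ≠ y → (!x) = y := by decide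
      have hxl : ∀ x y : Bool, xor (!x) y = !(xor x y) := by decide
      have hxr : ∀ x y : Bool, xor x (!y) = !(xor x y) := by decide
      have para : ∀ v : Fin n → Bool, xor (reflT a v a) (reflT a v j) = !(xor (v a) (v j)) := by
        intro v
        rw [reflT_same, reflT_other hja, hxl]
      have parj : ∀ v : Fin n → Bool, xor (reflT j v a) (reflT j v j) = !(xor (v a) (v j)) := by
        intro v
        rw [reflT_same, reflT_other (Ne.symm hja), hxr]
      have park : ∀ (v : Fin n → Bool) (k : Fin n), k ≠ a → k ≠ j →
          xor (reflT k v a) (reflT k v j) = xor (v a) (v j) := by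
        intro v k hka hkj
        rw [reflT_other (Ne.symm hka), reflT_other (Ne.symm hkj)]
      have key : ∀ v : Fin n → Bool,
          (xor (v a) (v j) = xor (u a) (u j) ∧ m v = a ∧ m (reflT a v) = j) ∨
          (xor (v a) (v j) ≠ xor (u a) (u j) ∧ m v = j ∧ m (reflT a v) = a) := by
        refine cube_conn _ u (Or.inl ⟨rfl, rfl, rfl⟩) ?_
        intro v k hQ
        rcases eq_or_ne k a with rfl | hka
        · rcases hQ with ⟨hp, h1, h2⟩ | ⟨hp, h1, h2⟩
          · right
            refine ⟨?_, h2, by rwa [reflT_invol]⟩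
            rw [para, hp]
            exact hb2 _
          · left
            refine ⟨?_, h2, by rwa [reflT_invol]⟩
            rw [para]
            exact hb3 _ _ hp
        rcases eq_or_ne k j with rfl | hkj
        · rcases hQ with ⟨hp, h1, h2⟩ | ⟨hp, h1, h2⟩
          · -- disjunct 1, k = j
            right
            have hmw : m (reflT j v) = j := by
              rcases C v j with h | h | h
              · exfalso
                refine I (reflT j v) a j (Ne.symm hja) (h.trans h1) ?_
                rw [reflT_comm a j, reflT_invol]
                exact h2
              · exact h
              · exact absurd (h.symm.trans h1) hja
            have hmy : m (reflT a (reflT j v)) = a := by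
              rcases C (reflT j v) a with h | h | h
              · exfalso
                apply hE (reflT a (reflT j v))
                rw [h.trans hmw]
                rw [reflT_comm a j, reflT_invol]
                exact h2
              · exact h
              · exact absurd (h.symm.trans hmw) (Ne.symm hja)
            refine ⟨?_, hmw, hmy⟩
            rw [parj, hp]
            exact hb2 _
          · -- disjunct 2, k = j
            left
            have hmy : m (reflT a (reflT j v)) = j := by
              rw [reflT_comm a j]
              rcases C (reflT a v) j with h | h | h
              · exfalso
                refine I (reflT j (reflT a v)) a j (Ne.symm hja) (h.trans h2) ?_
                rw [reflT_comm a j, reflT_invol, reflT_invol]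
                exact h1
              · exact h
              · exact absurd (h.symm.trans h2) hja
            have hmw : m (reflT j v) = a := by
              rcases C (reflT j v) a with h | h | h
              · exfalso
                apply hE v
                rw [h1]
                exact h.symm.trans hmy
              · exact absurd (hmy.symm.trans h) hja
              · exact h
            refine ⟨?_, hmw, hmy⟩
            rw [parj]
            exact hb3 _ _ hp
        · -- k ∉ {a, j}
          rcases hQ with ⟨hp, h1, h2⟩ | ⟨hp, h1, h2⟩
          · left
            have hmx : m (reflT a (reflT k v)) = j := by
              rw [reflT_comm a k]
              rcases C (reflT a v) k with h | h | h
              · exact h.trans h2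
              · exfalso
                refine I (reflT k (reflT a v)) k a hka h ?_
                rw [reflT_invol, reflT_invol]
                exact h1
              · exact absurd (h.symm.trans h2) hkj
            have hmw : m (reflT k v) = a := by
              rcases C v k with h | h | h
              · exact h.trans h1
              · rcases C (reflT k v) a with h' | h' | h'
                · exact absurd (hmx.symm.trans (h'.trans h)) (Ne.symm hkj)
                · exact absurd (hmx.symm.trans h') hja
                · exact h'
              · exact absurd (h.symm.trans h1) hka
            exact ⟨by rw [park v k hka hkj]; exact hp, hmw, hmx⟩
          · right
            have hmw : m (reflT k v) = j := by
              rcases C v k with h | h | h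
              · exact h.trans h1
              · exfalso
                refine I (reflT k v) k a hka h ?_
                rw [reflT_invol]
                exact h2
              · exact absurd (h.symm.trans h1) hkj
            have hmx : m (reflT a (reflT k v)) = a := by
              rcases C (reflT k v) a with h | h | h
              · exfalso
                have hxj : m (reflT a (reflT k v)) = j := h.trans hmw
                have hC := C (reflT a v) k
                rw [← reflT_comm a k, h2] at hC
                rcases hC with h' | h' | h'
                · exact hja (hxj.symm.trans h')
                · exact (Ne.symm hkj) (hxj.symm.trans h')
                · exact hka h'.symm
              · exact h
              · exact absurd (h.symm.trans hmw) (Ne.symm hja)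
            exact ⟨by rw [park v k hka hkj]; exact hp, hmw, hmx⟩
      right; right
      have hxf : ∀ x y : Bool, xor x y = false → x = y := by decide
      have hxt : ∀ x y : Bool, xor x y = true → x ≠ y := by decide
      have hbnt : ∀ b : Bool, b ≠ true → b = false := by decide
      have hbnf : ∀ b : Bool, b ≠ false → b = true := by decide
      rcases Bool.dichotomy (xor (u a) (u j)) with hε | hε
      · -- ε = false : ψ = reflT a ∘ swapT a j
        refine ⟨a, j, Ne.symm hja, fun v => ?_⟩
        rcases key v with ⟨hp, h1, _⟩ | ⟨hp, h1, _⟩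
        · rw [hms v, h1, swapT_eq_self (hxf _ _ (hp.trans hε))]
        · rw [hε] at hp
          have hne : v a ≠ v j := hxt _ _ (hbnf _ hp)
          rw [hms v, h1, swapT_eq_reflT (Ne.symm hja) hne, reflT_invol]
      · -- ε = true : ψ = reflT j ∘ swapT j a
        refine ⟨j, a, hja, fun v => ?_⟩
        rcases key v with ⟨hp, h1, _⟩ | ⟨hp, h1, _⟩
        · have hne : v j ≠ v a := Ne.symm (hxt _ _ (hp.trans hε))
          rw [hms v, h1, swapT_eq_reflT hja hne, reflT_invol]
        · rw [hε] at hp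
          have heq : v j = v a := (hxf _ _ (hbnt _ hp)).symm
          rw [hms v, h1, swapT_eq_self heq]
end FRhelpers

/-- two injective singular cubes with the same rigid image that are
pointwise equal-or-adjacent differ by the identity, a reflection, or a
quarter-turn rotation `T_i ∘ T_{i,j}`. -/
theorem flip_or_rotation {V : Type*} (G : SimpleGraph V) {n : ℕ}
    (σ γ : (Fin n → Bool) → V)
    (hσ : IsGraphMap (Cube n) G σ) (hγ : IsGraphMap (Cube n) G γ)
    (hσinj : Function.Injective σ) (hγinj : Function.Injective γ)
    (hrange : Set.range σ = Set.range γ)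
    (hrigid : ∀ s t, G.Adj (σ s) (σ t) → (Cube n).Adj s t)
    (hclose : ∀ t, σ t = γ t ∨ G.Adj (σ t) (γ t)) :
    γ = σ ∨ (∃ k, γ = σ ∘ reflT k) ∨
      (∃ i j, i ≠ j ∧ γ = σ ∘ reflT i ∘ swapT i j) := by
  have hmem : ∀ t, γ t ∈ Set.range σ := fun t => hrange ▸ Set.mem_range_self t
  choose ψ hψ using hmem
  have hinj : Function.Injective ψ := fun s t h => hγinj (by rw [← hψ, ← hψ, h])
  have hadjψ : ∀ s t, (Cube n).Adj s t → (Cube n).Adj (ψ s) (ψ t) := by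
    intro s t h
    rcases hγ h with h' | h'
    · rw [← hψ s, ← hψ t] at h'
      exact hrigid _ _ h'
    · exact absurd (hγinj h') h.ne
  have hclψ : ∀ t, ψ t = t ∨ (Cube n).Adj t (ψ t) := by
    intro t
    rcases hclose t with h | h
    · exact Or.inl (hσinj ((hψ t).trans h.symm))
    · exact Or.inr (hrigid _ _ (by rw [hψ]; exact h))
  rcases cube_core ψ hinj hadjψ hclψ with h | ⟨k, h⟩ | ⟨i, j, hij, h⟩
  · left
    funext t
    rw [← hψ, h]
  · right; left
    exact ⟨k, funext fun t => by rw [← hψ t, h]; rfl⟩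
  · right; right
    exact ⟨i, j, hij, funext fun t => by rw [← hψ t, h]; rfl⟩
end

section
/- Let σ : I^{n+1} → G be a singular (n+1)-cube with f_i^- σ = (f_i^+ σ) ∘ T_j T_{j,m} for indices i < j < m (i.e., a pair of opposite i-faces related by a quarter-turn rotation). Then f_i^- f_j^a f_m^b σ = f_i^+ f_j^{-b} f_m^a σ for all signs a, b. -/
lemma insertNth_eval {α : Sort*} {n : ℕ} (p : Fin (n+1)) (x : α) (f : Fin n → α) (k : Fin (n+1)) :
    Fin.insertNth (α := fun _ => α) p x f k =
      if h : (k:ℕ) = (p:ℕ) then x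
      else if h2 : (k:ℕ) < (p:ℕ) then f ⟨k, by omega⟩
      else f ⟨(k:ℕ)-1, by omega⟩ := by
  rcases eq_or_ne k p with rfl | hne
  · simp
  · obtain ⟨j, rfl⟩ := Fin.exists_succAbove_eq hne
    rw [Fin.insertNth_apply_succAbove]
    have hco : ((p.succAbove j : Fin (n+1)) : ℕ) = if (j:ℕ) < (p:ℕ) then (j:ℕ) else (j:ℕ)+1 := by
      unfold Fin.succAbove
      split_ifs with h1 h2 h2 <;> simp_all [Fin.lt_def, Fin.castSucc, Fin.succ]
    split_ifs at hco ⊢ with h0 h1 h2 h1 h2 <;>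
      first
        | omega
        | (congr 1; exact Fin.ext (by simp only [Fin.val_mk]; omega))

lemma ins_eq {α : Sort*} {n : ℕ} (p : ℕ) (hp : p < n+1) (x : α) (f : Fin n → α)
    (kv : ℕ) (hk : kv < n+1) (h : kv = p) :
    Fin.insertNth (α := fun _ => α) ⟨p, hp⟩ x f ⟨kv, hk⟩ = x := by
  rw [insertNth_eval, dif_pos (show kv = p from h)]

lemma ins_lt {α : Sort*} {n : ℕ} (p : ℕ) (hp : p < n+1) (x : α) (f : Fin n → α)
    (kv : ℕ) (hk : kv < n+1) (h : kv < p) :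
    Fin.insertNth (α := fun _ => α) ⟨p, hp⟩ x f ⟨kv, hk⟩ = f ⟨kv, by omega⟩ := by
  rw [insertNth_eval, dif_neg (show ¬ kv = p by omega), dif_pos (show kv < p from h)]

lemma ins_gt {α : Sort*} {n : ℕ} (p : ℕ) (hp : p < n+1) (x : α) (f : Fin n → α)
    (kv : ℕ) (hk : kv < n+1) (h : p < kv) :
    Fin.insertNth (α := fun _ => α) ⟨p, hp⟩ x f ⟨kv, hk⟩ = f ⟨kv - 1, by omega⟩ := by
  rw [insertNth_eval, dif_neg (show ¬ kv = p by omega)]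
  rw [dif_neg (show ¬ kv < p by omega)]

lemma insert_shift {n : ℕ} (i j m : ℕ) (hm : m < n + 3) (hij : i < j) (hjm : j < m)
    (x y z : Bool) (t : Fin n → Bool) :
    (⟨m, hm⟩ : Fin (n+3)).insertNth y
      ((⟨j, by omega⟩ : Fin (n+2)).insertNth x ((⟨i, by omega⟩ : Fin (n+1)).insertNth z t))
      = Fin.insertNth (α := fun _ => Bool) (⟨i, by omega⟩ : Fin (n+3)) z
        ((⟨m-1, by omega⟩ : Fin (n+2)).insertNth y ((⟨j-1, by omega⟩ : Fin (n+1)).insertNth x t)) := by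
  funext k
  obtain ⟨kv, hk⟩ := k
  rcases Nat.lt_trichotomy kv i with h1 | h1 | h1
  · rw [ins_lt m hm y _ kv hk (by omega), ins_lt j (by omega) x _ kv (by omega) (by omega),
      ins_lt i (by omega) z _ kv (by omega) (by omega),
      ins_lt i (by omega) z _ kv hk (by omega),
      ins_lt (m-1) (by omega) y _ kv (by omega) (by omega),
      ins_lt (j-1) (by omega) x _ kv (by omega) (by omega)]
  · rw [ins_lt m hm y _ kv hk (by omega), ins_lt j (by omega) x _ kv (by omega) (by omega),
      ins_eq i (by omega) z _ kv (by omega) h1, ins_eq i (by omega) z _ kv hk h1]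
  · rcases Nat.lt_trichotomy kv j with h2 | h2 | h2
    · rw [ins_lt m hm y _ kv hk (by omega), ins_lt j (by omega) x _ kv (by omega) (by omega),
        ins_gt i (by omega) z _ kv (by omega) (by omega),
        ins_gt i (by omega) z _ kv hk (by omega),
        ins_lt (m-1) (by omega) y _ (kv-1) (by omega) (by omega),
        ins_lt (j-1) (by omega) x _ (kv-1) (by omega) (by omega)]
    · rw [ins_lt m hm y _ kv hk (by omega), ins_eq j (by omega) x _ kv (by omega) h2,
        ins_gt i (by omega) z _ kv hk (by omega),
        ins_lt (m-1) (by omega) y _ (kv-1) (by omega) (by omega),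
        ins_eq (j-1) (by omega) x _ (kv-1) (by omega) (by omega)]
    · rcases Nat.lt_trichotomy kv m with h3 | h3 | h3
      · rw [ins_lt m hm y _ kv hk (by omega), ins_gt j (by omega) x _ kv (by omega) (by omega),
          ins_gt i (by omega) z _ (kv-1) (by omega) (by omega),
          ins_gt i (by omega) z _ kv hk (by omega),
          ins_lt (m-1) (by omega) y _ (kv-1) (by omega) (by omega),
          ins_gt (j-1) (by omega) x _ (kv-1) (by omega) (by omega)]
      · rw [ins_eq m hm y _ kv hk h3,
          ins_gt i (by omega) z _ kv hk (by omega),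
          ins_eq (m-1) (by omega) y _ (kv-1) (by omega) (by omega)]
      · rw [ins_gt m hm y _ kv hk (by omega), ins_gt j (by omega) x _ (kv-1) (by omega) (by omega),
          ins_gt i (by omega) z _ (kv-1-1) (by omega) (by omega),
          ins_gt i (by omega) z _ kv hk (by omega),
          ins_gt (m-1) (by omega) y _ (kv-1) (by omega) (by omega),
          ins_gt (j-1) (by omega) x _ (kv-1-1) (by omega) (by omega)]

lemma upd_eq {α : Sort*} {n : ℕ} (f : Fin n → α) (p : ℕ) (hp : p < n) (x : α)
    (kv : ℕ) (hk : kv < n) (h : kv = p) :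
    Function.update f ⟨p, hp⟩ x ⟨kv, hk⟩ = x := by
  rw [show (⟨kv, hk⟩ : Fin n) = ⟨p, hp⟩ from Fin.ext h]
  exact Function.update_self _ _ _

lemma upd_ne {α : Sort*} {n : ℕ} (f : Fin n → α) (p : ℕ) (hp : p < n) (x : α)
    (kv : ℕ) (hk : kv < n) (h : kv ≠ p) :
    Function.update f ⟨p, hp⟩ x ⟨kv, hk⟩ = f ⟨kv, hk⟩ :=
  Function.update_of_ne (Fin.ne_of_val_ne (show kv ≠ p from h)) _ _

lemma rot_insert {n : ℕ} (j m : ℕ) (hj : 1 ≤ j) (hjm : j < m) (hm : m < n + 3)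
    (a b : Bool) (t : Fin n → Bool) :
    reflT (⟨j - 1, by omega⟩ : Fin (n + 2))
      (swapT (⟨j - 1, by omega⟩ : Fin (n + 2)) (⟨m - 1, by omega⟩ : Fin (n + 2))
        ((⟨m-1, by omega⟩ : Fin (n+2)).insertNth b ((⟨j-1, by omega⟩ : Fin (n+1)).insertNth a t)))
    = Fin.insertNth (α := fun _ => Bool) (⟨m-1, by omega⟩ : Fin (n+2)) a
        ((⟨j-1, by omega⟩ : Fin (n+1)).insertNth (!b) t) := by
  funext k
  obtain ⟨kv, hk⟩ := k
  simp only [reflT, swapT, Function.comp_apply]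
  rw [Equiv.swap_apply_left]
  rw [ins_eq (m-1) (by omega) b _ (m-1) (by omega) rfl]
  rcases Nat.lt_trichotomy kv (j-1) with h1 | h1 | h1
  · rw [upd_ne _ (j-1) (by omega) _ kv hk (by omega),
        Function.comp_apply,
      Equiv.swap_apply_of_ne_of_ne (Fin.ne_of_val_ne (show kv ≠ j-1 by omega))
        (Fin.ne_of_val_ne (show kv ≠ m-1 by omega)),
      ins_lt (m-1) (by omega) b _ kv hk (by omega),
      ins_lt (j-1) (by omega) a _ kv (by omega) (by omega),
      ins_lt (m-1) (by omega) a _ kv hk (by omega),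
      ins_lt (j-1) (by omega) (!b) _ kv (by omega) (by omega)]
  · rw [upd_eq _ (j-1) (by omega) _ kv hk h1,
      ins_lt (m-1) (by omega) a _ kv hk (by omega),
      ins_eq (j-1) (by omega) (!b) _ kv (by omega) h1]
  · rcases Nat.lt_trichotomy kv (m-1) with h2 | h2 | h2
    · rw [upd_ne _ (j-1) (by omega) _ kv hk (by omega),
        Function.comp_apply,
        Equiv.swap_apply_of_ne_of_ne (Fin.ne_of_val_ne (show kv ≠ j-1 by omega))
          (Fin.ne_of_val_ne (show kv ≠ m-1 by omega)),
        ins_lt (m-1) (by omega) b _ kv hk (by omega),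
        ins_gt (j-1) (by omega) a _ kv (by omega) (by omega),
        ins_lt (m-1) (by omega) a _ kv hk (by omega),
        ins_gt (j-1) (by omega) (!b) _ kv (by omega) (by omega)]
    · rw [upd_ne _ (j-1) (by omega) _ kv hk (by omega),
        Function.comp_apply,
        show (⟨kv, hk⟩ : Fin (n+2)) = ⟨m-1, by omega⟩ from Fin.ext h2,
        Equiv.swap_apply_right,
        ins_lt (m-1) (by omega) b _ (j-1) (by omega) (by omega),
        ins_eq (j-1) (by omega) a _ (j-1) (by omega) rfl,
        ins_eq (m-1) (by omega) a _ (m-1) (by omega) rfl]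
    · rw [upd_ne _ (j-1) (by omega) _ kv hk (by omega),
        Function.comp_apply,
        Equiv.swap_apply_of_ne_of_ne (Fin.ne_of_val_ne (show kv ≠ j-1 by omega))
          (Fin.ne_of_val_ne (show kv ≠ m-1 by omega)),
        ins_gt (m-1) (by omega) b _ kv hk (by omega),
        ins_gt (j-1) (by omega) a _ (kv-1) (by omega) (by omega),
        ins_gt (m-1) (by omega) a _ kv hk (by omega),
        ins_gt (j-1) (by omega) (!b) _ (kv-1) (by omega) (by omega)]

/-- if opposite faces of `σ` satisfy `f_i^- σ = (f_i^+ σ) ∘ T_j T_{j,m}`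
for `i < j < m` (indices `j-1`, `m-1` in the face), then
`f_i^- f_j^a f_m^b σ = f_i^+ f_j^{-b} f_m^a σ` for all signs `a, b`. -/
theorem codim_three_relation_of_rotation {V : Type*} (G : SimpleGraph V) {n : ℕ}
    (i j m : ℕ) (hij : i < j) (hjm : j < m) (hm : m < n + 3)
    (σ : (Fin (n + 3) → Bool) → V) (hσ : IsGraphMap (Cube (n + 3)) G σ)
    (hrot : face (⟨i, by omega⟩ : Fin (n + 3)) false σ =
      (face (⟨i, by omega⟩ : Fin (n + 3)) true σ) ∘
        (fun t : Fin (n + 2) → Bool =>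
          reflT (⟨j - 1, by omega⟩ : Fin (n + 2))
            (swapT (⟨j - 1, by omega⟩ : Fin (n + 2)) (⟨m - 1, by omega⟩ : Fin (n + 2)) t)))
    (a b : Bool) :
    face (⟨i, by omega⟩ : Fin (n + 1)) false
        (face (⟨j, by omega⟩ : Fin (n + 2)) a (face (⟨m, hm⟩ : Fin (n + 3)) b σ)) =
      face (⟨i, by omega⟩ : Fin (n + 1)) true
        (face (⟨j, by omega⟩ : Fin (n + 2)) (!b) (face (⟨m, hm⟩ : Fin (n + 3)) a σ)) := by
  funext t
  simp only [face]
  have key := congrFun hrot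
    ((⟨m-1, by omega⟩ : Fin (n+2)).insertNth b ((⟨j-1, by omega⟩ : Fin (n+1)).insertNth a t))
  simp only [face, Function.comp_apply] at key
  rw [insert_shift i j m hm hij hjm a b false t,
    insert_shift i j m hm hij hjm (!b) a true t, key,
    rot_insert j m (by omega) hjm hm a b t]
end

section
/- Let σ : I^{n+1} → G be a singular (n+1)-cube in which two adjacent faces f_i^a σ and f_j^a σ (i < j, same sign a) are both injective with the same image equal to a rigid n-cube Q. If σ = σ ∘ T_{i,j} (which holds when f_i^{-a} f_j^a σ = f_i^a f_j^{-a} σ and Q is rigid), then f_i^a σ = (f_j^a σ) ∘ T_{i,i+1} ∘ T_{i+1,i+2} ∘ ⋯ ∘ T_{j-2,j-1}. -/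
/-- The composite of adjacent transpositions `T_{i,i+1} ∘ T_{i+1,i+2} ∘ ⋯ ∘ T_{j-2,j-1}`
(0-based indices) on the discrete `n`-cube. -/
def adjSwapChain (n : ℕ) (i j : ℕ) : (Fin n → Bool) → (Fin n → Bool) :=
  ((List.range (j - i - 1)).map fun k =>
    if h : i + k + 1 < n then
      swapT (⟨i + k, by omega⟩ : Fin n) ⟨i + k + 1, h⟩
    else id).foldr (· ∘ ·) id



lemma insertNth_eq_nat {β : Type*} {n : ℕ} (i : Fin (n+1)) (a : β) (t : Fin n → β) (k : Fin (n+1)) :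
    Fin.insertNth (α := fun _ => β) i a t k = if h : (k:ℕ) < (i:ℕ) then t ⟨k, by omega⟩
      else if h2 : (k:ℕ) = (i:ℕ) then a else t ⟨(k:ℕ)-1, by omega⟩ := by
  rcases lt_trichotomy (k:ℕ) (i:ℕ) with h | h | h
  · rw [dif_pos h, Fin.insertNth_apply_below (Fin.lt_def.2 h)]
    rw [eq_rec_constant]
    rfl
  · rw [dif_neg (by omega), dif_pos h]
    have : k = i := Fin.ext h
    subst this; simp
  · rw [dif_neg (by omega), dif_neg (by omega), Fin.insertNth_apply_above (Fin.lt_def.2 h)]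
    simp [Fin.pred, Fin.subNat]

lemma foldr_comp_f {α : Type*} (L : List (α → α)) (f : α → α) :
    L.foldr (· ∘ ·) f = (L.foldr (· ∘ ·) id) ∘ f := by
  induction L with
  | nil => rfl
  | cons g L ih => simp [List.foldr_cons, ih, Function.comp_assoc]

lemma adjSwapChain_apply (n i : ℕ) (d : ℕ) (hd : i + d + 1 ≤ n) (t : Fin n → Bool) (m : Fin n) :
    adjSwapChain n i (i + d + 1) t m =
      if (m : ℕ) = i then t ⟨i + d, by omega⟩
      else if i < (m : ℕ) ∧ (m : ℕ) ≤ i + d then t ⟨(m : ℕ) - 1, by omega⟩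
      else t m := by
  induction d generalizing t with
  | zero =>
    have h0 : i + 0 + 1 - i - 1 = 0 := by omega
    simp only [adjSwapChain, h0, List.range_zero, List.map_nil, List.foldr_nil, id]
    split_ifs with h1 h2
    · congr 1; exact Fin.ext (by simpa using h1)
    · omega
    · rfl
  | succ d ih =>
    have hrange : i + (d+1) + 1 - i - 1 = d + 1 := by omega
    have hd' : i + d + 1 < n := by omega
    have hstep : adjSwapChain n i (i + (d+1) + 1) t =
        adjSwapChain n i (i + d + 1) (swapT (⟨i+d, by omega⟩ : Fin n) ⟨i+d+1, hd'⟩ t) := by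
      simp only [adjSwapChain, hrange, List.range_succ, List.map_append, List.map_cons,
        List.map_nil, List.foldr_append, List.foldr_cons, List.foldr_nil,
        show i + d + 1 - i - 1 = d by omega, dif_pos hd']
      rw [foldr_comp_f]
      rfl
    rw [hstep, ih (by omega)]
    set t' := swapT (⟨i+d, by omega⟩ : Fin n) ⟨i+d+1, hd'⟩ t with ht'
    have happ : ∀ m : Fin n, t' m = t (Equiv.swap (⟨i+d, by omega⟩ : Fin n) ⟨i+d+1, hd'⟩ m) :=
      fun _ => rfl
    split_ifs with h1 h2 h3 h3
    · rw [happ, Equiv.swap_apply_left]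
      exact congrArg t (Fin.ext (by simp only [Fin.val_mk]; omega))
    · rw [happ, Equiv.swap_apply_of_ne_of_ne
        (Fin.ne_of_val_ne (by simp only [Fin.val_mk]; omega))
        (Fin.ne_of_val_ne (by simp only [Fin.val_mk]; omega))]
    · omega
    · have hm : (m : ℕ) = i + d + 1 := by omega
      have hs : Equiv.swap (⟨i+d, by omega⟩ : Fin n) ⟨i+d+1, hd'⟩ m = ⟨i+d, by omega⟩ := by
        have hme : m = (⟨i+d+1, hd'⟩ : Fin n) := Fin.ext hm
        subst hme
        exact Equiv.swap_apply_right _ _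
      rw [happ, hs]
      congr 1
      exact Fin.ext (by simp only [Fin.val_mk]; omega)
    · rw [happ, Equiv.swap_apply_of_ne_of_ne
        (Fin.ne_of_val_ne (by simp only [Fin.val_mk]; omega))
        (Fin.ne_of_val_ne (by simp only [Fin.val_mk]; omega))]

lemma swap_insertNth_key {n : ℕ} (i j : Fin (n+1)) (hij : i < j) (a : Bool) (t : Fin n → Bool) :
    swapT i j (Fin.insertNth (α := fun _ => Bool) i a t) =
      Fin.insertNth (α := fun _ => Bool) j a (adjSwapChain n i j t) := by
  have hij' : (i:ℕ) < (j:ℕ) := hij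
  have hjn : (j:ℕ) ≤ n := by omega
  have hj' : (i:ℕ) + ((j:ℕ) - (i:ℕ) - 1) + 1 = (j:ℕ) := by omega
  have hchain : ∀ m : Fin n, adjSwapChain n (i:ℕ) (j:ℕ) t m =
      if (m:ℕ) = (i:ℕ) then t ⟨(i:ℕ) + ((j:ℕ) - (i:ℕ) - 1), by omega⟩
      else if (i:ℕ) < (m:ℕ) ∧ (m:ℕ) ≤ (i:ℕ) + ((j:ℕ) - (i:ℕ) - 1) then t ⟨(m:ℕ)-1, by omega⟩
      else t m := by
    intro m
    conv_lhs => rw [← hj']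
    exact adjSwapChain_apply n i ((j:ℕ) - (i:ℕ) - 1) (by omega) t m
  funext k
  show Fin.insertNth (α := fun _ => Bool) i a t (Equiv.swap i j k)
      = Fin.insertNth (α := fun _ => Bool) j a (adjSwapChain n i j t) k
  rcases eq_or_ne k i with hk1 | hk1
  · subst hk1
    rw [Equiv.swap_apply_left, insertNth_eq_nat, insertNth_eq_nat,
      dif_neg (by omega), dif_neg (by omega), dif_pos hij', hchain,
      if_pos (by simp only [Fin.val_mk])]
    exact congrArg t (Fin.ext (by simp only [Fin.val_mk]; omega))
  · rcases eq_or_ne k j with hk2 | hk2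
    · subst hk2
      rw [Equiv.swap_apply_right, insertNth_eq_nat, insertNth_eq_nat,
        dif_neg (by omega), dif_pos rfl, dif_neg (by omega), dif_pos rfl]
    · have hki : (k:ℕ) ≠ (i:ℕ) := fun h => hk1 (Fin.ext h)
      have hkj : (k:ℕ) ≠ (j:ℕ) := fun h => hk2 (Fin.ext h)
      rw [Equiv.swap_apply_of_ne_of_ne hk1 hk2, insertNth_eq_nat, insertNth_eq_nat]
      rcases lt_trichotomy (k:ℕ) (i:ℕ) with h | h | h
      · rw [dif_pos h, dif_pos (by omega), hchain,
          if_neg (by simp only [Fin.val_mk]; omega),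
          if_neg (by simp only [Fin.val_mk]; omega)]
      · omega
      · rw [dif_neg (by omega), dif_neg (by omega)]
        rcases lt_trichotomy (k:ℕ) (j:ℕ) with h2 | h2 | h2
        · rw [dif_pos h2, hchain, if_neg (by simp only [Fin.val_mk]; omega),
            if_pos (by simp only [Fin.val_mk]; omega)]
        · omega
        · rw [dif_neg (by omega), dif_neg (by omega), hchain,
            if_neg (by simp only [Fin.val_mk]; omega),
            if_neg (by simp only [Fin.val_mk]; omega)]

/-- if the adjacent faces `f_i^a σ` and `f_j^a σ` (`i < j`, same sign)
are injective with the same rigid image and `σ = σ ∘ T_{i,j}`, then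
`f_i^a σ = (f_j^a σ) ∘ T_{i,i+1} ∘ T_{i+1,i+2} ∘ ⋯ ∘ T_{j-2,j-1}`. -/
theorem adjacent_faces_same_sign_relation {V : Type*} (G : SimpleGraph V) {n : ℕ}
    (σ : (Fin (n + 1) → Bool) → V) (hσ : IsGraphMap (Cube (n + 1)) G σ)
    (i j : Fin (n + 1)) (hij : i < j) (a : Bool)
    (hiinj : Function.Injective (face i a σ)) (hjinj : Function.Injective (face j a σ))
    (hrange : Set.range (face i a σ) = Set.range (face j a σ))
    (hrigid : ∀ s t, G.Adj (face j a σ s) (face j a σ t) → (Cube n).Adj s t)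
    (hswap : σ = σ ∘ swapT i j) :
    face i a σ = (face j a σ) ∘ adjSwapChain n i j := by
  funext t
  calc face i a σ t = σ (i.insertNth a t) := rfl
    _ = σ (swapT i j (i.insertNth a t)) := congrFun hswap _
    _ = σ (j.insertNth a (adjSwapChain n i j t)) := by
        rw [swap_insertNth_key i j hij a t]
    _ = (face j a σ ∘ adjSwapChain n i j) t := rfl
end

section
/- For every 4-cycle Q in the Greene sphere G^sph_n with n ≥ 4, Q is an induced subgraph (rigid 2-cube); moreover Q is monophobic: every singular 3-cube σ : I^3 → G^sph_n having a face supported by Q has at least one additional face supported by Q. -/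
/-- `τ` is supported by the cube given by the embedding `φ`: the images of `τ` and
`φ` agree as subgraphs (same vertices and same edges). -/
def Supports {V : Type*} {n : ℕ} (φ τ : (Fin n → Bool) → V) : Prop :=
  Set.range τ = Set.range φ ∧
    ∀ a b, (Cube n).Adj a b → ∃ s t, (Cube n).Adj s t ∧ τ s = φ a ∧ τ t = φ b

/-- The rigid cube given by the injective embedding `φ` is quasimonophobic in `G`:
every noninjective singular `(n+1)`-cube of `G` with a face supported by it has at
least one additional face supported by it. -/
def IsQuasimonophobicCube {V : Type*} (G : SimpleGraph V) {n : ℕ}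
    (φ : (Fin n → Bool) → V) : Prop :=
  ∀ σ : (Fin (n + 1) → Bool) → V, IsGraphMap (Cube (n + 1)) G σ →
    ¬ Function.Injective σ →
    ∀ i b, Supports φ (face i b σ) →
      ∃ j c, (j, c) ≠ (i, b) ∧ Supports φ (face j c σ)

/-- `G` is `n`-quasimonophobic: every `n`-cube in `G` (image of an injective
singular `n`-cube) is rigid (induced, i.e. the embedding reflects adjacency)
and quasimonophobic. -/
def NQuasimonophobic {V : Type*} (G : SimpleGraph V) (n : ℕ) : Prop :=
  ∀ φ : (Fin n → Bool) → V, IsGraphMap (Cube n) G φ → Function.Injective φ →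
    (∀ s t, G.Adj (φ s) (φ t) → (Cube n).Adj s t) ∧ IsQuasimonophobicCube G φ
def greeneRel (n : ℕ) : (ZMod (2 * n) ⊕ Bool) → (ZMod (2 * n) ⊕ Bool) → Prop
  | .inl a, .inl b => b = a + 1
  | .inl a, .inr c => (a.val % 2 = 1 ∧ c = false) ∨ (a.val % 2 = 0 ∧ c = true)
  | _, _ => False

/-- The Greene sphere `G^sph_n`: a `2n`-cycle on `{0,…,2n-1}` together with a vertex
`u = Sum.inr false` adjacent to all odd vertices and a vertex `v = Sum.inr true`
adjacent to all even vertices. -/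
def GreeneSphere (n : ℕ) : SimpleGraph (ZMod (2 * n) ⊕ Bool) where
  Adj x y := x ≠ y ∧ (greeneRel n x y ∨ greeneRel n y x)
  symm := ⟨fun _ _ ⟨hne, h⟩ => ⟨hne.symm, h.symm⟩⟩
  loopless := ⟨fun _ ⟨hne, _⟩ => hne rfl⟩

open Sum

instance (n : ℕ) : DecidableRel (Cube n).Adj := fun x y =>
  inferInstanceAs (Decidable (∃ i, (x i ≠ y i) ∧ ∀ j, (x j ≠ y j) → j = i))

def qc (r : ZMod 4) : Fin 2 → Bool := ![decide (r = 1 ∨ r = 2), decide (r = 2 ∨ r = 3)]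

lemma zfour : ∀ r : ZMod 4, r = 0 ∨ r = 1 ∨ r = 2 ∨ r = 3 := by decide
lemma z44 : ∀ x : ZMod 4, x + 4 = x := by decide
lemma qc_surj : ∀ s : Fin 2 → Bool, ∃ r, qc r = s := by decide
lemma qc_adj : ∀ r, (Cube 2).Adj (qc r) (qc (r+1)) := by decide
lemma qc_cases : ∀ r r' : ZMod 4, r ≠ r' → (Cube 2).Adj (qc r) (qc r') ∨ r' = r + 2 := by decide
lemma qc_inj : ∀ r r', qc r = qc r' → r = r' := by decide
lemma cube_ins_adj : ∀ (i : Fin 3) (b : Bool) (s t : Fin 2 → Bool), (Cube 2).Adj s t →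
    (Cube 3).Adj (i.insertNth b s) (i.insertNth b t) := by decide
lemma cube_ins_flip : ∀ (i : Fin 3) (b : Bool) (t : Fin 2 → Bool),
    (Cube 3).Adj (i.insertNth b t) (i.insertNth (!b) t) := by decide

def sideX (i : Fin 3) (b : Bool) (k : ZMod 4) (r : ZMod 4) : Fin 3 → Bool :=
  if r = 0 then i.insertNth b (qc k) else if r = 1 then i.insertNth b (qc (k+1))
  else if r = 2 then i.insertNth (!b) (qc (k+1)) else i.insertNth (!b) (qc k)

set_option maxHeartbeats 4000000 in
set_option maxRecDepth 10000 in
lemma cube_side : ∀ (i : Fin 3) (b : Bool) (k : ZMod 4),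
    ∃ (j : Fin 3) (c : Bool), j ≠ i ∧ ∃ u : ZMod 4 → ZMod 4,
      ((∀ m, u (m+1) = u m + 1) ∨ (∀ m, u (m+1) = u m - 1)) ∧
      ∀ r, Fin.insertNth j c (qc r) = sideX i b k (u r) := by decide

lemma range_corners {W : Type*} (f : (Fin 2 → Bool) → W) (x : W) :
    x ∈ Set.range f ↔ ∃ r, f (qc r) = x := by
  constructor
  · rintro ⟨s, rfl⟩
    obtain ⟨r, rfl⟩ := qc_surj s
    exact ⟨r, rfl⟩
  · rintro ⟨r, rfl⟩
    exact ⟨qc r, rfl⟩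

lemma inj_of_range_eq {W : Type*} [DecidableEq W] (f g : (Fin 2 → Bool) → W)
    (hg : Function.Injective g) (h : Set.range f = Set.range g) : Function.Injective f := by
  have h1 : (Finset.univ.image f) = (Finset.univ.image g) := by
    apply Finset.coe_injective
    simpa [Set.image_univ] using h
  have h2 : (Finset.univ.image f).card = (Finset.univ : Finset (Fin 2 → Bool)).card := by
    rw [h1, Finset.card_image_of_injective _ hg]
  have h3 := Finset.injOn_of_card_image_eq h2
  intro u v huv
  exact h3 (Finset.mem_coe.mpr (Finset.mem_univ u)) (Finset.mem_coe.mpr (Finset.mem_univ v)) huv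


namespace GSq

variable {n : ℕ}

/-- parity of a cycle vertex -/
def par (x : ZMod (2*n)) : Bool := decide (x.val % 2 = 0)

def AdjOrEq (x y : ZMod (2*n) ⊕ Bool) : Prop := (GreeneSphere n).Adj x y ∨ x = y

lemma kne (hn : 8 ≤ 2*n) (k : ℕ) (h0 : 0 < k) (h8 : k < 8) : (k : ZMod (2*n)) ≠ 0 := by
  haveI : NeZero (2*n) := ⟨by omega⟩
  intro h
  rw [ZMod.natCast_eq_zero_iff] at h
  exact absurd (Nat.le_of_dvd h0 h) (by omega)

lemma adj_inl_inl (hn : 8 ≤ 2*n) (x y : ZMod (2*n)) :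
    (GreeneSphere n).Adj (inl x) (inl y) ↔ y = x + 1 ∨ y = x - 1 := by
  have h1 : (1 : ZMod (2*n)) ≠ 0 := by
    have := kne hn 1 (by omega) (by omega); simpa using this
  constructor
  · rintro ⟨hne, h | h⟩
    · exact Or.inl (by simpa [greeneRel] using h)
    · refine Or.inr ?_
      have : x = y + 1 := by simpa [greeneRel] using h
      rw [this]; ring
  · rintro (rfl | rfl)
    · refine ⟨?_, Or.inl rfl⟩
      simp only [ne_eq, inl.injEq]
      intro h; exact h1 (by linear_combination -h)
    · refine ⟨?_, Or.inr (show x = x - 1 + 1 by ring)⟩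
      simp only [ne_eq, inl.injEq]
      intro h; exact h1 (by linear_combination h)

lemma adj_inl_inr (x : ZMod (2*n)) (c : Bool) :
    (GreeneSphere n).Adj (inl x) (inr c) ↔ c = par x := by
  constructor
  · rintro ⟨-, h | h⟩
    · rcases h with ⟨h1, rfl⟩ | ⟨h1, rfl⟩ <;> simp [par, h1]
    · exact absurd h (by simp [greeneRel])
  · rintro rfl
    refine ⟨by simp, Or.inl ?_⟩
    have := Nat.mod_two_eq_zero_or_one (x.val)
    rcases this with h | h <;> simp [greeneRel, par, h]

lemma not_adj_inr_inr (c c' : Bool) : ¬ (GreeneSphere n).Adj (inr c) (inr c') := by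
  rintro ⟨-, h | h⟩ <;> exact h

lemma par_add_one (hn : 8 ≤ 2*n) (x : ZMod (2*n)) : par (x + 1) = !par x := by
  haveI : NeZero (2*n) := ⟨by omega⟩
  haveI : Fact (1 < 2*n) := ⟨by omega⟩
  have hv : (x + 1).val = (x.val + 1) % (2*n) := by
    rw [ZMod.val_add, ZMod.val_one]
  have h2 : (x.val + 1) % (2*n) % 2 = (x.val + 1) % 2 := Nat.mod_mod_of_dvd _ ⟨n, rfl⟩
  have := Nat.mod_two_eq_zero_or_one (x.val)
  rcases this with h | h <;> simp [par, hv, h2, h, Nat.add_mod, decide_eq_true_iff] <;> omega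

lemma par_sub_one (hn : 8 ≤ 2*n) (x : ZMod (2*n)) : par (x - 1) = !par x := by
  have := par_add_one hn (x - 1)
  simp at this
  rw [← Bool.not_not (par (x-1)), ← this]


lemma adjOrEq_symm {x y : ZMod (2*n) ⊕ Bool} (h : AdjOrEq x y) : AdjOrEq y x :=
  h.elim (fun h => Or.inl h.symm) (fun h => Or.inr h.symm)

lemma adjOrEq_inl (hn : 8 ≤ 2*n) (x : ZMod (2*n)) (y : ZMod (2*n) ⊕ Bool)
    (h : AdjOrEq (inl x) y) :
    y = inl x ∨ y = inl (x+1) ∨ y = inl (x-1) ∨ y = inr (par x) := by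
  rcases h with h | h
  · cases y with
    | inl z =>
      rcases (adj_inl_inl hn x z).mp h with rfl | rfl
      · exact Or.inr (Or.inl rfl)
      · exact Or.inr (Or.inr (Or.inl rfl))
    | inr c =>
      exact Or.inr (Or.inr (Or.inr (congrArg inr ((adj_inl_inr x c).mp h))))
  · exact Or.inl h.symm

lemma adjOrEq_inr_inr {c c' : Bool} (h : AdjOrEq (n := n) (inr c) (inr c')) : c' = c := by
  rcases h with h | h
  · exact absurd h (not_adj_inr_inr c c')
  · exact (inr.injEq .. ▸ h).symm

lemma adj_inr_dest {c : Bool} {y : ZMod (2*n) ⊕ Bool} (h : (GreeneSphere n).Adj (inr c) y) :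
    ∃ z, y = inl z ∧ par z = c := by
  cases y with
  | inl z => exact ⟨z, rfl, ((adj_inl_inr z c).mp h.symm).symm⟩
  | inr c' => exact absurd h (not_adj_inr_inr c c')

lemma nadj_ii (hn : 8 ≤ 2*n) {x y : ZMod (2*n)} (h0 : y ≠ x) (h1 : y ≠ x+1) (h2 : y ≠ x-1) :
    ¬ AdjOrEq (n := n) (inl x) (inl y) := by
  intro h
  rcases adjOrEq_inl hn x _ h with h | h | h | h
  · exact h0 (by injection h)
  · exact h1 (by injection h)
  · exact h2 (by injection h)
  · exact absurd h (by simp)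

lemma nadj_ir {x : ZMod (2*n)} {c : Bool} (h : c ≠ par x) :
    ¬ AdjOrEq (n := n) (inl x) (inr c) := by
  rintro (hh | hh)
  · exact h ((adj_inl_inr x c).mp hh)
  · exact absurd hh (by simp)

lemma nadj_ri {x : ZMod (2*n)} {c : Bool} (h : par x ≠ c) :
    ¬ AdjOrEq (n := n) (inr c) (inl x) := by
  rintro (hh | hh)
  · rcases adj_inr_dest hh with ⟨z, hz, hp⟩
    injection hz with hz; exact h (hz ▸ hp)
  · exact absurd hh (by simp)

lemma nadj_rr {c c' : Bool} (h : c' ≠ c) : ¬ AdjOrEq (n := n) (inr c) (inr c') :=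
  fun hh => h (adjOrEq_inr_inr hh)

/-- the canonical labelled square -/
def can (a : ZMod (2*n)) (w : Bool) : ZMod 4 → ZMod (2*n) ⊕ Bool := fun m =>
  if m = 0 then inl a else if m = 1 then inl (a+1) else if m = 2 then inl (a+2) else inr w

lemma can0 (a : ZMod (2*n)) (w : Bool) : can a w 0 = inl a := rfl
lemma can1 (a : ZMod (2*n)) (w : Bool) : can a w 1 = inl (a+1) := rfl
lemma can2 (a : ZMod (2*n)) (w : Bool) : can a w 2 = inl (a+2) := rfl
lemma can3 (a : ZMod (2*n)) (w : Bool) : can a w 3 = inr w := rfl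

def DihRep (f g : ZMod 4 → ZMod (2*n) ⊕ Bool) : Prop :=
  ∃ s, (∀ m, f m = g (m+s)) ∨ (∀ m, f m = g (s-m))

lemma dih_symm {f g : ZMod 4 → ZMod (2*n) ⊕ Bool} (h : DihRep f g) : DihRep g f := by
  rcases h with ⟨s, h | h⟩
  · refine ⟨-s, Or.inl fun m => ?_⟩
    have := h (m + -s); rw [show m + -s + s = m from by ring] at this; exact this.symm
  · refine ⟨s, Or.inr fun m => ?_⟩
    have := h (s - m); rw [show s - (s - m) = m from by ring] at this; exact this.symm

lemma dih_trans {f g h : ZMod 4 → ZMod (2*n) ⊕ Bool} (h1 : DihRep f g) (h2 : DihRep g h) :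
    DihRep f h := by
  rcases h1 with ⟨s, hs | hs⟩ <;> rcases h2 with ⟨t, ht | ht⟩
  · exact ⟨s + t, Or.inl fun m => by rw [hs m, ht (m+s), show m + s + t = m + (s+t) from by ring]⟩
  · exact ⟨t - s, Or.inr fun m => by rw [hs m, ht (m+s), show t - (m+s) = t - s - m from by ring]⟩
  · exact ⟨s + t, Or.inr fun m => by rw [hs m, ht (s-m), show s - m + t = s + t - m from by ring]⟩
  · exact ⟨t - s, Or.inl fun m => by rw [hs m, ht (s-m), show t - (s-m) = m + (t - s) from by ring]⟩

lemma dih_diag {f g : ZMod 4 → ZMod (2*n) ⊕ Bool} (h : DihRep f g)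
    (hg : ∀ m, ¬ (GreeneSphere n).Adj (g m) (g (m+2))) :
    ∀ m, ¬ (GreeneSphere n).Adj (f m) (f (m+2)) := by
  rcases h with ⟨s, hs | hs⟩ <;> intro m hadj
  · rw [hs m, hs (m+2), show m + 2 + s = (m + s) + 2 from by ring] at hadj
    exact hg (m+s) hadj
  · rw [hs m, hs (m+2), show s - (m + 2) = (s - m - 2) from by ring] at hadj
    exact hg (s - m - 2) (by rw [show s - m - 2 + 2 = s - m from by ring]; exact hadj.symm)

lemma dih_range {f g : ZMod 4 → ZMod (2*n) ⊕ Bool} (h : DihRep f g) (x : ZMod (2*n) ⊕ Bool) :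
    (∃ m, f m = x) ↔ (∃ m, g m = x) := by
  rcases h with ⟨s, hs | hs⟩
  · constructor
    · rintro ⟨m, rfl⟩; exact ⟨m + s, (hs m).symm⟩
    · rintro ⟨m, rfl⟩
      exact ⟨m - s, by rw [hs (m - s), show m - s + s = m from by ring]⟩
  · constructor
    · rintro ⟨m, rfl⟩; exact ⟨s - m, (hs m).symm⟩
    · rintro ⟨m, rfl⟩
      exact ⟨s - m, by rw [hs (s - m), show s - (s - m) = m from by ring]⟩

lemma candiag (hn : 8 ≤ 2*n) (a : ZMod (2*n)) (w : Bool)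
    (hw : (GreeneSphere n).Adj (inl a) (inr w)) :
    ∀ m, ¬ (GreeneSphere n).Adj (can a w m) (can a w (m+2)) := by
  have K1 : (1 : ZMod (2*n)) ≠ 0 := by have := kne hn 1 (by omega) (by omega); simpa using this
  have K3 : (3 : ZMod (2*n)) ≠ 0 := by have := kne hn 3 (by omega) (by omega); simpa using this
  have hw' : w = par a := (adj_inl_inr a w).mp hw
  have F1 : ¬ (GreeneSphere n).Adj (inl a) (inl (a+2)) := by
    intro h
    rcases (adj_inl_inl hn a (a+2)).mp h with h | h
    · exact K1 (by linear_combination h)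
    · exact K3 (by linear_combination h)
  have F2 : ¬ (GreeneSphere n).Adj (inl (a+1)) (inr w) := by
    intro h
    have := (adj_inl_inr (a+1) w).mp h
    rw [par_add_one hn, ← hw'] at this
    exact (w.not_ne_self) this.symm
  have z4' : ∀ r : ZMod 4, r = 0 ∨ r = 1 ∨ r = 2 ∨ r = 3 := by decide
  intro m
  rcases z4' m with rfl | rfl | rfl | rfl
  · exact F1
  · rw [show ((1:ZMod 4)+2) = 3 from by decide, can1, can3]; exact F2
  · rw [show ((2:ZMod 4)+2) = 0 from by decide, can2, can0]
    exact fun h => F1 h.symm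
  · rw [show ((3:ZMod 4)+2) = 1 from by decide, can3, can1]
    exact fun h => F2 h.symm

lemma no_all_inl (hn : 8 ≤ 2*n) (x0 x1 x2 x3 : ZMod (2*n))
    (h01 : (GreeneSphere n).Adj (inl x0) (inl x1))
    (h12 : (GreeneSphere n).Adj (inl x1) (inl x2))
    (h23 : (GreeneSphere n).Adj (inl x2) (inl x3))
    (h30 : (GreeneSphere n).Adj (inl x3) (inl x0))
    (h02 : x0 ≠ x2) (h13 : x1 ≠ x3) : False := by
  have K2 : (2 : ZMod (2*n)) ≠ 0 := by have := kne hn 2 (by omega) (by omega); simpa using this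
  have K4 : (4 : ZMod (2*n)) ≠ 0 := by have := kne hn 4 (by omega) (by omega); simpa using this
  rcases (adj_inl_inl hn _ _).mp h01 with rfl | rfl <;>
    rcases (adj_inl_inl hn _ _).mp h12 with rfl | rfl <;>
      rcases (adj_inl_inl hn _ _).mp h23 with rfl | rfl <;>
        rcases (adj_inl_inl hn _ _).mp h30 with h | h
  · exact K4 (by linear_combination -h)
  · exact K2 (by linear_combination -h)
  · exact h13 (by ring)
  · exact h13 (by ring)
  · exact h02 (by ring)
  · exact h02 (by ring)
  · exact h02 (by ring)
  · exact h02 (by ring)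
  · exact h02 (by ring)
  · exact h02 (by ring)
  · exact h02 (by ring)
  · exact h02 (by ring)
  · exact h13 (by ring)
  · exact h13 (by ring)
  · exact K2 (by linear_combination h)
  · exact K4 (by linear_combination h)

lemma FCQ3 (hn : 8 ≤ 2*n) (P : ZMod 4 → ZMod (2*n) ⊕ Bool)
    (hadj : ∀ m, (GreeneSphere n).Adj (P m) (P (m+1)))
    (h02 : P 0 ≠ P 2) (h13 : P 1 ≠ P 3) {c : Bool} (hc : P 3 = inr c) :
    ∃ a w, (GreeneSphere n).Adj (inl a) (inr w) ∧ DihRep P (can a w) := by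
  have h30 := hadj 3
  rw [show ((3:ZMod 4)+1) = 0 from by decide, hc] at h30
  have h23 := hadj 2
  rw [show ((2:ZMod 4)+1) = 3 from by decide, hc] at h23
  obtain ⟨x0, e0, hp0⟩ := adj_inr_dest h30
  obtain ⟨x2, e2, hp2⟩ := adj_inr_dest h23.symm
  have h01 := hadj 0
  rw [show ((0:ZMod 4)+1) = 1 from by decide, e0] at h01
  have h12 := hadj 1
  rw [show ((1:ZMod 4)+1) = 2 from by decide, e2] at h12
  rcases e1 : P 1 with x1 | c1
  case inr =>
    exfalso
    rw [e1] at h01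
    have := (adj_inl_inr x0 c1).mp h01
    rw [hp0] at this
    exact h13 (by rw [e1, hc, this])
  case inl =>
  rw [e1] at h01 h12
  have h02' : x0 ≠ x2 := fun h => h02 (by rw [e0, e2, h])
  rcases (adj_inl_inl hn _ _).mp h01 with rfl | rfl
  · -- x1 = x0 + 1
    rcases (adj_inl_inl hn _ _).mp h12 with rfl | h
    · -- x2 = x0 + 2
      rw [e0] at h30
      refine ⟨x0, c, h30.symm, 0, Or.inl fun m => ?_⟩
      have z4' : ∀ r : ZMod 4, r = 0 ∨ r = 1 ∨ r = 2 ∨ r = 3 := by decide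
      rcases z4' m with rfl | rfl | rfl | rfl
      · rw [show ((0:ZMod 4)+0) = 0 from by decide, can0]; exact e0
      · rw [show ((1:ZMod 4)+0) = 1 from by decide, can1]; exact e1
      · rw [show ((2:ZMod 4)+0) = 2 from by decide, can2, e2]
        exact congrArg inl (by ring)
      · rw [show ((3:ZMod 4)+0) = 3 from by decide, can3]; exact hc
    · exact absurd (by rw [h]; ring) h02'.symm
  · -- x1 = x0 - 1
    rcases (adj_inl_inl hn _ _).mp h12 with h | rfl
    · exact absurd (by rw [h]; ring) h02'.symm
    · -- x2 = x0 - 2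
      rw [e2] at h23
      refine ⟨x0 - 1 - 1, c, h23, 2, Or.inr fun m => ?_⟩
      have z4' : ∀ r : ZMod 4, r = 0 ∨ r = 1 ∨ r = 2 ∨ r = 3 := by decide
      rcases z4' m with rfl | rfl | rfl | rfl
      · rw [show ((2:ZMod 4)-0) = 2 from by decide, can2, e0]
        exact congrArg inl (by ring)
      · rw [show ((2:ZMod 4)-1) = 1 from by decide, can1, e1]
        exact congrArg inl (by ring)
      · rw [show ((2:ZMod 4)-2) = 0 from by decide, can0, e2]
      · rw [show ((2:ZMod 4)-3) = 3 from by decide, can3, hc]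

lemma FCQ (hn : 8 ≤ 2*n) (P : ZMod 4 → ZMod (2*n) ⊕ Bool)
    (hadj : ∀ m, (GreeneSphere n).Adj (P m) (P (m+1)))
    (h02 : P 0 ≠ P 2) (h13 : P 1 ≠ P 3) :
    ∃ a w, (GreeneSphere n).Adj (inl a) (inr w) ∧ DihRep P (can a w) := by
  have rot : ∀ t : ZMod 4, (∀ m, (GreeneSphere n).Adj (P (m+t)) (P (m+t+1))) := by
    intro t m
    exact hadj (m + t)
  have back : ∀ (t : ZMod 4),
      (∃ a w, (GreeneSphere n).Adj (inl a) (inr w) ∧ DihRep (fun r => P (r + t)) (can a w)) →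
      (∃ a w, (GreeneSphere n).Adj (inl a) (inr w) ∧ DihRep P (can a w)) := by
    rintro t ⟨a, w, hw, h⟩
    refine ⟨a, w, hw, dih_trans ⟨-t, Or.inl fun m => ?_⟩ h⟩
    show P m = P (m + -t + t)
    rw [show m + -t + t = m from by ring]
  rcases e3 : P 3 with x3 | c3
  case inr => exact FCQ3 hn P hadj h02 h13 e3
  case inl =>
  rcases e2 : P 2 with x2 | c2
  case inr =>
    refine back 3 (FCQ3 hn _ (fun m => by have := rot 3 m; rwa [show m + 3 + 1 = m + 1 + 3 from by ring] at this) ?_ ?_ (by show P (3+3) = _; rw [show ((3:ZMod 4)+3) = 2 from by decide]; exact e2))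
    · show P (0+3) ≠ P (2+3)
      rw [show ((0:ZMod 4)+3) = 3 from by decide, show ((2:ZMod 4)+3) = 1 from by decide]
      exact fun h => h13 h.symm
    · show P (1+3) ≠ P (3+3)
      rw [show ((1:ZMod 4)+3) = 0 from by decide, show ((3:ZMod 4)+3) = 2 from by decide]
      exact h02
  case inl =>
  rcases e1 : P 1 with x1 | c1
  case inr =>
    refine back 2 (FCQ3 hn _ (fun m => by have := rot 2 m; rwa [show m + 2 + 1 = m + 1 + 2 from by ring] at this) ?_ ?_ (by show P (3+2) = _; rw [show ((3:ZMod 4)+2) = 1 from by decide]; exact e1))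
    · show P (0+2) ≠ P (2+2)
      rw [show ((0:ZMod 4)+2) = 2 from by decide, show ((2:ZMod 4)+2) = 0 from by decide]
      exact fun h => h02 h.symm
    · show P (1+2) ≠ P (3+2)
      rw [show ((1:ZMod 4)+2) = 3 from by decide, show ((3:ZMod 4)+2) = 1 from by decide]
      exact fun h => h13 h.symm
  case inl =>
  rcases e0 : P 0 with x0 | c0
  case inr =>
    refine back 1 (FCQ3 hn _ (fun m => by have := rot 1 m; rwa [show m + 1 + 1 = m + 1 + 1 from rfl] at this) ?_ ?_ (by show P (3+1) = _; rw [show ((3:ZMod 4)+1) = 0 from by decide]; exact e0))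
    · show P (0+1) ≠ P (2+1)
      rw [show ((0:ZMod 4)+1) = 1 from by decide, show ((2:ZMod 4)+1) = 3 from by decide]
      exact h13
    · show P (1+1) ≠ P (3+1)
      rw [show ((1:ZMod 4)+1) = 2 from by decide, show ((3:ZMod 4)+1) = 0 from by decide]
      exact fun h => h02 h.symm
  case inl =>
    exfalso
    refine no_all_inl hn x0 x1 x2 x3 ?_ ?_ ?_ ?_ (fun h => h02 (by rw [e0, e2, h])) (fun h => h13 (by rw [e1, e3, h]))
    · have := hadj 0; rwa [show ((0:ZMod 4)+1) = 1 from by decide, e0, e1] at this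
    · have := hadj 1; rwa [show ((1:ZMod 4)+1) = 2 from by decide, e1, e2] at this
    · have := hadj 2; rwa [show ((2:ZMod 4)+1) = 3 from by decide, e2, e3] at this
    · have := hadj 3; rwa [show ((3:ZMod 4)+1) = 0 from by decide, e3, e0] at this


lemma CORE (hn : 8 ≤ 2*n) (a : ZMod (2*n)) (w : Bool)
    (hw : (GreeneSphere n).Adj (inl a) (inr w)) (Q : ZMod 4 → ZMod (2*n) ⊕ Bool)
    (h10 : AdjOrEq (inl a) (Q 0)) (h11 : AdjOrEq (inl (a+1)) (Q 1))
    (h12 : AdjOrEq (inl (a+2)) (Q 2)) (h13 : AdjOrEq (inr w) (Q 3))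
    (h2 : ∀ m, AdjOrEq (Q m) (Q (m+1))) :
    (∃ m, Q m = can a w (m+3) ∧ Q (m+1) = can a w (m+2)) ∨ DihRep Q (can a w) := by
  have K1 : (1 : ZMod (2*n)) ≠ 0 := by have := kne hn 1 (by omega) (by omega); simpa using this
  have K2 : (2 : ZMod (2*n)) ≠ 0 := by have := kne hn 2 (by omega) (by omega); simpa using this
  have K3 : (3 : ZMod (2*n)) ≠ 0 := by have := kne hn 3 (by omega) (by omega); simpa using this
  have K4 : (4 : ZMod (2*n)) ≠ 0 := by have := kne hn 4 (by omega) (by omega); simpa using this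
  have K5 : (5 : ZMod (2*n)) ≠ 0 := by have := kne hn 5 (by omega) (by omega); simpa using this
  have K6 : (6 : ZMod (2*n)) ≠ 0 := by have := kne hn 6 (by omega) (by omega); simpa using this
  have hw' : w = par a := (adj_inl_inr a w).mp hw
  have p1 : par (a+1) = !w := by rw [par_add_one hn, ← hw']
  have p2 : par (a+2) = w := by
    rw [show a+2 = (a+1)+1 from by ring, par_add_one hn, p1, Bool.not_not]
  have p3 : par (a+3) = !w := by rw [show a+3 = (a+2)+1 from by ring, par_add_one hn, p2]
  -- neighbourhood lists
  have LA : ∀ y, AdjOrEq (n:=n) (inl a) y →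
      y = inl a ∨ y = inl (a+1) ∨ y = inl (a-1) ∨ y = inr w := by
    intro y h
    rcases adjOrEq_inl hn _ y h with h | h | h | h
    · exact Or.inl h
    · exact Or.inr (Or.inl h)
    · exact Or.inr (Or.inr (Or.inl h))
    · exact Or.inr (Or.inr (Or.inr (by rw [h, ← hw'])))
  have LB : ∀ y, AdjOrEq (n:=n) (inl (a+1)) y →
      y = inl (a+1) ∨ y = inl (a+2) ∨ y = inl a ∨ y = inr (!w) := by
    intro y h
    rcases adjOrEq_inl hn _ y h with h | h | h | h
    · exact Or.inl h
    · exact Or.inr (Or.inl (by rw [h]; exact congrArg inl (by ring)))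
    · exact Or.inr (Or.inr (Or.inl (by rw [h]; exact congrArg inl (by ring))))
    · exact Or.inr (Or.inr (Or.inr (by rw [h, p1])))
  have LC : ∀ y, AdjOrEq (n:=n) (inl (a+2)) y →
      y = inl (a+2) ∨ y = inl (a+3) ∨ y = inl (a+1) ∨ y = inr w := by
    intro y h
    rcases adjOrEq_inl hn _ y h with h | h | h | h
    · exact Or.inl h
    · exact Or.inr (Or.inl (by rw [h]; exact congrArg inl (by ring)))
    · exact Or.inr (Or.inr (Or.inl (by rw [h]; exact congrArg inl (by ring))))
    · exact Or.inr (Or.inr (Or.inr (by rw [h, p2])))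
  have LE : ∀ y, AdjOrEq (n:=n) (inl (a+3)) y →
      y = inl (a+3) ∨ y = inl (a+4) ∨ y = inl (a+2) ∨ y = inr (!w) := by
    intro y h
    rcases adjOrEq_inl hn _ y h with h | h | h | h
    · exact Or.inl h
    · exact Or.inr (Or.inl (by rw [h]; exact congrArg inl (by ring)))
    · exact Or.inr (Or.inr (Or.inl (by rw [h]; exact congrArg inl (by ring))))
    · exact Or.inr (Or.inr (Or.inr (by rw [h, p3])))
  -- non-adjacency facts
  have N_a_2 : ¬ AdjOrEq (n:=n) (inl a) (inl (a+2)) :=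
    nadj_ii hn (fun h => K2 (by linear_combination h)) (fun h => K1 (by linear_combination h))
      (fun h => K3 (by linear_combination h))
  have N_a_3 : ¬ AdjOrEq (n:=n) (inl a) (inl (a+3)) :=
    nadj_ii hn (fun h => K3 (by linear_combination h)) (fun h => K2 (by linear_combination h))
      (fun h => K4 (by linear_combination h))
  have N_2_a : ¬ AdjOrEq (n:=n) (inl (a+2)) (inl a) :=
    nadj_ii hn (fun h => K2 (by linear_combination -h)) (fun h => K3 (by linear_combination -h))
      (fun h => K1 (by linear_combination -h))
  have N_3_a : ¬ AdjOrEq (n:=n) (inl (a+3)) (inl a) :=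
    nadj_ii hn (fun h => K3 (by linear_combination -h)) (fun h => K4 (by linear_combination -h))
      (fun h => K2 (by linear_combination -h))
  have N_1_3 : ¬ AdjOrEq (n:=n) (inl (a+1)) (inl (a+3)) :=
    nadj_ii hn (fun h => K2 (by linear_combination h)) (fun h => K1 (by linear_combination h))
      (fun h => K3 (by linear_combination h))
  have N_4_1 : ¬ AdjOrEq (n:=n) (inl (a+4)) (inl (a+1)) :=
    nadj_ii hn (fun h => K3 (by linear_combination -h)) (fun h => K4 (by linear_combination -h))
      (fun h => K2 (by linear_combination -h))
  have N_m1_1 : ¬ AdjOrEq (n:=n) (inl (a-1)) (inl (a+1)) :=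
    nadj_ii hn (fun h => K2 (by linear_combination h)) (fun h => K1 (by linear_combination h))
      (fun h => K3 (by linear_combination h))
  have N_m1_2 : ¬ AdjOrEq (n:=n) (inl (a-1)) (inl (a+2)) :=
    nadj_ii hn (fun h => K3 (by linear_combination h)) (fun h => K2 (by linear_combination h))
      (fun h => K4 (by linear_combination h))
  have N_2_m1 : ¬ AdjOrEq (n:=n) (inl (a+2)) (inl (a-1)) :=
    nadj_ii hn (fun h => K3 (by linear_combination -h)) (fun h => K4 (by linear_combination -h))
      (fun h => K2 (by linear_combination -h))
  have N_4_m1 : ¬ AdjOrEq (n:=n) (inl (a+4)) (inl (a-1)) :=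
    nadj_ii hn (fun h => K5 (by linear_combination -h)) (fun h => K6 (by linear_combination -h))
      (fun h => K4 (by linear_combination -h))
  have N_a_w' : ¬ AdjOrEq (n:=n) (inl a) (inr (!w)) :=
    nadj_ir (by rw [← hw']; exact w.not_ne_self)
  have N_1_w : ¬ AdjOrEq (n:=n) (inl (a+1)) (inr w) :=
    nadj_ir (by rw [p1]; exact fun h => w.not_ne_self h.symm)
  have N_w_1 : ¬ AdjOrEq (n:=n) (inr w) (inl (a+1)) := nadj_ri (by rw [p1]; exact w.not_ne_self)
  have N_w_3 : ¬ AdjOrEq (n:=n) (inr w) (inl (a+3)) := nadj_ri (by rw [p3]; exact w.not_ne_self)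
  have N_w'_2 : ¬ AdjOrEq (n:=n) (inr (!w)) (inl (a+2)) :=
    nadj_ri (by rw [p2]; exact fun h => w.not_ne_self h.symm)
  have N_w_w' : ¬ AdjOrEq (n:=n) (inr w) (inr (!w)) := nadj_rr w.not_ne_self
  have N_w'_w : ¬ AdjOrEq (n:=n) (inr (!w)) (inr w) := nadj_rr (fun h => w.not_ne_self h.symm)
  -- exit helpers
  have z4' : ∀ r : ZMod 4, r = 0 ∨ r = 1 ∨ r = 2 ∨ r = 3 := by decide
  have S0 : Q 0 = inr w → Q 1 = inl (a+2) →
      (∃ m, Q m = can a w (m+3) ∧ Q (m+1) = can a w (m+2)) := by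
    intro hA hB
    refine ⟨0, by rw [show ((0:ZMod 4)+3) = 3 from by decide, can3]; exact hA, ?_⟩
    rw [show ((0:ZMod 4)+1) = 1 from by decide, show ((0:ZMod 4)+2) = 2 from by decide, can2]
    exact hB
  have S1 : Q 1 = inl a → Q 2 = inr w →
      (∃ m, Q m = can a w (m+3) ∧ Q (m+1) = can a w (m+2)) := by
    intro hB hC
    refine ⟨1, by rw [show ((1:ZMod 4)+3) = 0 from by decide, can0]; exact hB, ?_⟩
    rw [show ((1:ZMod 4)+1) = 2 from by decide, show ((1:ZMod 4)+2) = 3 from by decide, can3]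
    exact hC
  have S2 : Q 2 = inl (a+1) → Q 3 = inl a →
      (∃ m, Q m = can a w (m+3) ∧ Q (m+1) = can a w (m+2)) := by
    intro hC hD
    refine ⟨2, by rw [show ((2:ZMod 4)+3) = 1 from by decide, can1]; exact hC, ?_⟩
    rw [show ((2:ZMod 4)+1) = 3 from by decide, show ((2:ZMod 4)+2) = 0 from by decide, can0]
    exact hD
  have S3 : Q 3 = inl (a+2) → Q 0 = inl (a+1) →
      (∃ m, Q m = can a w (m+3) ∧ Q (m+1) = can a w (m+2)) := by
    intro hD hA
    refine ⟨3, by rw [show ((3:ZMod 4)+3) = 2 from by decide, can2]; exact hD, ?_⟩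
    rw [show ((3:ZMod 4)+1) = 0 from by decide, show ((3:ZMod 4)+2) = 1 from by decide, can1]
    exact hA
  have R0 : Q 0 = inl a → Q 1 = inl (a+1) → Q 2 = inl (a+2) → Q 3 = inr w →
      DihRep Q (can a w) := by
    intro hA hB hC hD
    refine ⟨0, Or.inl fun m => ?_⟩
    rcases z4' m with rfl | rfl | rfl | rfl
    · rw [show ((0:ZMod 4)+0) = 0 from by decide, can0]; exact hA
    · rw [show ((1:ZMod 4)+0) = 1 from by decide, can1]; exact hB
    · rw [show ((2:ZMod 4)+0) = 2 from by decide, can2]; exact hC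
    · rw [show ((3:ZMod 4)+0) = 3 from by decide, can3]; exact hD
  have R1 : Q 0 = inl (a+1) → Q 1 = inl (a+2) → Q 2 = inr w → Q 3 = inl a →
      DihRep Q (can a w) := by
    intro hA hB hC hD
    refine ⟨1, Or.inl fun m => ?_⟩
    rcases z4' m with rfl | rfl | rfl | rfl
    · rw [show ((0:ZMod 4)+1) = 1 from by decide, can1]; exact hA
    · rw [show ((1:ZMod 4)+1) = 2 from by decide, can2]; exact hB
    · rw [show ((2:ZMod 4)+1) = 3 from by decide, can3]; exact hC
    · rw [show ((3:ZMod 4)+1) = 0 from by decide, can0]; exact hD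
  have R3 : Q 0 = inr w → Q 1 = inl a → Q 2 = inl (a+1) → Q 3 = inl (a+2) →
      DihRep Q (can a w) := by
    intro hA hB hC hD
    refine ⟨3, Or.inl fun m => ?_⟩
    rcases z4' m with rfl | rfl | rfl | rfl
    · rw [show ((0:ZMod 4)+3) = 3 from by decide, can3]; exact hA
    · rw [show ((1:ZMod 4)+3) = 0 from by decide, can0]; exact hB
    · rw [show ((2:ZMod 4)+3) = 1 from by decide, can1]; exact hC
    · rw [show ((3:ZMod 4)+3) = 2 from by decide, can2]; exact hD
  -- normalized edge constraints
  have h20 := h2 0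
  rw [show ((0:ZMod 4)+1) = 1 from by decide] at h20
  have h21 := h2 1
  rw [show ((1:ZMod 4)+1) = 2 from by decide] at h21
  have h22 := h2 2
  rw [show ((2:ZMod 4)+1) = 3 from by decide] at h22
  have h23 := h2 3
  rw [show ((3:ZMod 4)+1) = 0 from by decide] at h23
  -- the case tree
  rcases LA _ h10 with hA | hA | hA | hA
  · -- Q 0 = inl a
    rcases LB _ h11 with hB | hB | hB | hB
    · -- Q 1 = inl (a+1)
      rw [hB] at h21
      rcases LC _ h12 with hC | hC | hC | hC
      · -- Q 2 = inl (a+2)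
        rw [hC] at h22
        rcases LC _ h22 with hD | hD | hD | hD
        · rw [hD, hA] at h23; exact absurd h23 N_2_a
        · rw [hD, hA] at h23; exact absurd h23 N_3_a
        · rw [hD] at h13; exact absurd h13 N_w_1
        · exact Or.inr (R0 hA hB hC hD)
      · rw [hC] at h21; exact absurd h21 N_1_3
      · -- Q 2 = inl (a+1)
        rw [hC] at h22
        rcases LB _ h22 with hD | hD | hD | hD
        · rw [hD] at h13; exact absurd h13 N_w_1
        · rw [hD, hA] at h23; exact absurd h23 N_2_a
        · exact Or.inl (S2 hC hD)
        · rw [hD] at h13; exact absurd h13 N_w_w'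
      · rw [hC] at h21; exact absurd h21 N_1_w
    · -- Q 1 = inl (a+2)
      rw [hA, hB] at h20; exact absurd h20 N_a_2
    · -- Q 1 = inl a
      rw [hB] at h21
      rcases LC _ h12 with hC | hC | hC | hC
      · rw [hC] at h21; exact absurd h21 N_a_2
      · rw [hC] at h21; exact absurd h21 N_a_3
      · -- Q 2 = inl (a+1)
        rw [hC] at h22
        rcases LB _ h22 with hD | hD | hD | hD
        · rw [hD] at h13; exact absurd h13 N_w_1
        · rw [hD, hA] at h23; exact absurd h23 N_2_a
        · exact Or.inl (S2 hC hD)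
        · rw [hD] at h13; exact absurd h13 N_w_w'
      · exact Or.inl (S1 hB hC)
    · -- Q 1 = inr (!w)
      rw [hA, hB] at h20; exact absurd h20 N_a_w'
  · -- Q 0 = inl (a+1)
    rcases LB _ h11 with hB | hB | hB | hB
    · -- Q 1 = inl (a+1)
      rw [hB] at h21
      rcases LC _ h12 with hC | hC | hC | hC
      · -- Q 2 = inl (a+2)
        rw [hC] at h22
        rcases LC _ h22 with hD | hD | hD | hD
        · exact Or.inl (S3 hD hA)
        · rw [hD] at h13; exact absurd h13 N_w_3
        · rw [hD] at h13; exact absurd h13 N_w_1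
        · rw [hD, hA] at h23; exact absurd h23 N_w_1
      · rw [hC] at h21; exact absurd h21 N_1_3
      · -- Q 2 = inl (a+1)
        rw [hC] at h22
        rcases LB _ h22 with hD | hD | hD | hD
        · rw [hD] at h13; exact absurd h13 N_w_1
        · exact Or.inl (S3 hD hA)
        · exact Or.inl (S2 hC hD)
        · rw [hD] at h13; exact absurd h13 N_w_w'
      · rw [hC] at h21; exact absurd h21 N_1_w
    · -- Q 1 = inl (a+2)
      rw [hB] at h21
      rcases LC _ h12 with hC | hC | hC | hC
      · -- Q 2 = inl (a+2)
        rw [hC] at h22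
        rcases LC _ h22 with hD | hD | hD | hD
        · exact Or.inl (S3 hD hA)
        · rw [hD] at h13; exact absurd h13 N_w_3
        · rw [hD] at h13; exact absurd h13 N_w_1
        · rw [hD, hA] at h23; exact absurd h23 N_w_1
      · -- Q 2 = inl (a+3)
        rw [hC] at h22
        rcases LE _ h22 with hD | hD | hD | hD
        · rw [hD] at h13; exact absurd h13 N_w_3
        · rw [hD, hA] at h23; exact absurd h23 N_4_1
        · exact Or.inl (S3 hD hA)
        · rw [hD] at h13; exact absurd h13 N_w_w'
      · -- Q 2 = inl (a+1)
        rw [hC] at h22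
        rcases LB _ h22 with hD | hD | hD | hD
        · rw [hD] at h13; exact absurd h13 N_w_1
        · exact Or.inl (S3 hD hA)
        · exact Or.inl (S2 hC hD)
        · rw [hD] at h13; exact absurd h13 N_w_w'
      · -- Q 2 = inr w
        have h23' := adjOrEq_symm h23
        rw [hA] at h23'
        rcases LB _ h23' with hD | hD | hD | hD
        · rw [hD] at h13; exact absurd h13 N_w_1
        · exact Or.inl (S3 hD hA)
        · exact Or.inr (R1 hA hB hC hD)
        · rw [hD] at h13; exact absurd h13 N_w_w'
    · -- Q 1 = inl a
      rw [hB] at h21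
      rcases LC _ h12 with hC | hC | hC | hC
      · rw [hC] at h21; exact absurd h21 N_a_2
      · rw [hC] at h21; exact absurd h21 N_a_3
      · -- Q 2 = inl (a+1)
        rw [hC] at h22
        rcases LB _ h22 with hD | hD | hD | hD
        · rw [hD] at h13; exact absurd h13 N_w_1
        · exact Or.inl (S3 hD hA)
        · exact Or.inl (S2 hC hD)
        · rw [hD] at h13; exact absurd h13 N_w_w'
      · exact Or.inl (S1 hB hC)
    · -- Q 1 = inr (!w)
      rw [hB] at h21
      rcases LC _ h12 with hC | hC | hC | hC
      · rw [hC] at h21; exact absurd h21 N_w'_2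
      · -- Q 2 = inl (a+3)
        rw [hC] at h22
        rcases LE _ h22 with hD | hD | hD | hD
        · rw [hD] at h13; exact absurd h13 N_w_3
        · rw [hD, hA] at h23; exact absurd h23 N_4_1
        · exact Or.inl (S3 hD hA)
        · rw [hD] at h13; exact absurd h13 N_w_w'
      · -- Q 2 = inl (a+1)
        rw [hC] at h22
        rcases LB _ h22 with hD | hD | hD | hD
        · rw [hD] at h13; exact absurd h13 N_w_1
        · exact Or.inl (S3 hD hA)
        · exact Or.inl (S2 hC hD)
        · rw [hD] at h13; exact absurd h13 N_w_w'
      · rw [hC] at h21; exact absurd h21 N_w'_w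
  · -- Q 0 = inl (a-1)
    rw [hA] at h20
    rcases LB _ h11 with hB | hB | hB | hB
    · rw [hB] at h20; exact absurd h20 N_m1_1
    · rw [hB] at h20; exact absurd h20 N_m1_2
    · -- Q 1 = inl a
      rw [hB] at h21
      rcases LC _ h12 with hC | hC | hC | hC
      · rw [hC] at h21; exact absurd h21 N_a_2
      · rw [hC] at h21; exact absurd h21 N_a_3
      · -- Q 2 = inl (a+1)
        rw [hC] at h22
        rcases LB _ h22 with hD | hD | hD | hD
        · rw [hD] at h13; exact absurd h13 N_w_1
        · rw [hD, hA] at h23; exact absurd h23 N_2_m1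
        · exact Or.inl (S2 hC hD)
        · rw [hD] at h13; exact absurd h13 N_w_w'
      · exact Or.inl (S1 hB hC)
    · -- Q 1 = inr (!w)
      rw [hB] at h21
      rcases LC _ h12 with hC | hC | hC | hC
      · rw [hC] at h21; exact absurd h21 N_w'_2
      · -- Q 2 = inl (a+3)
        rw [hC] at h22
        rcases LE _ h22 with hD | hD | hD | hD
        · rw [hD] at h13; exact absurd h13 N_w_3
        · rw [hD, hA] at h23; exact absurd h23 N_4_m1
        · rw [hD, hA] at h23; exact absurd h23 N_2_m1
        · rw [hD] at h13; exact absurd h13 N_w_w'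
      · -- Q 2 = inl (a+1)
        rw [hC] at h22
        rcases LB _ h22 with hD | hD | hD | hD
        · rw [hD] at h13; exact absurd h13 N_w_1
        · rw [hD, hA] at h23; exact absurd h23 N_2_m1
        · exact Or.inl (S2 hC hD)
        · rw [hD] at h13; exact absurd h13 N_w_w'
      · rw [hC] at h21; exact absurd h21 N_w'_w
  · -- Q 0 = inr w
    rw [hA] at h20
    rcases LB _ h11 with hB | hB | hB | hB
    · rw [hB] at h20; exact absurd h20 N_w_1
    · exact Or.inl (S0 hA hB)
    · -- Q 1 = inl a
      rw [hB] at h21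
      rcases LC _ h12 with hC | hC | hC | hC
      · rw [hC] at h21; exact absurd h21 N_a_2
      · rw [hC] at h21; exact absurd h21 N_a_3
      · -- Q 2 = inl (a+1)
        rw [hC] at h22
        rcases LB _ h22 with hD | hD | hD | hD
        · rw [hD] at h13; exact absurd h13 N_w_1
        · exact Or.inr (R3 hA hB hC hD)
        · exact Or.inl (S2 hC hD)
        · rw [hD] at h13; exact absurd h13 N_w_w'
      · exact Or.inl (S1 hB hC)
    · rw [hB] at h20; exact absurd h20 N_w_w'


lemma SUPP (φ τ' : (Fin 2 → Bool) → ZMod (2*n) ⊕ Bool)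
    (hφ : IsGraphMap (Cube 2) (GreeneSphere n) φ) (hφinj : Function.Injective φ)
    (y : ZMod 4 → ZMod (2*n) ⊕ Bool) (hy : ∀ r, τ' (qc r) = y r)
    (hrange : Set.range τ' = Set.range φ)
    (hd : ∀ r, ¬ (GreeneSphere n).Adj (y r) (y (r+2))) : Supports φ τ' := by
  refine ⟨hrange, ?_⟩
  intro α β hab
  have hne : α ≠ β := hab.ne
  have hadj : (GreeneSphere n).Adj (φ α) (φ β) := (hφ hab).resolve_right fun h => hne (hφinj h)
  have m1 : φ α ∈ Set.range τ' := by rw [hrange]; exact Set.mem_range_self α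
  have m2 : φ β ∈ Set.range τ' := by rw [hrange]; exact Set.mem_range_self β
  obtain ⟨s, hs⟩ := m1
  obtain ⟨t, ht⟩ := m2
  obtain ⟨ms, rfl⟩ := qc_surj s
  obtain ⟨mt, rfl⟩ := qc_surj t
  have hmne : ms ≠ mt := by rintro rfl; exact hadj.ne (hs.symm.trans ht)
  rcases qc_cases ms mt hmne with h | h
  · exact ⟨_, _, h, hs, ht⟩
  · exfalso
    apply hd ms
    rw [← hy ms, ← h, ← hy mt, hs, ht]
    exact hadj

lemma rigid (hn : 8 ≤ 2*n) (ψ : (Fin 2 → Bool) → ZMod (2*n) ⊕ Bool)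
    (hmap : IsGraphMap (Cube 2) (GreeneSphere n) ψ) (hinjψ : Function.Injective ψ) :
    ∀ s t, (GreeneSphere n).Adj (ψ s) (ψ t) → (Cube 2).Adj s t := by
  have mne : ∀ m : ZMod 4, m ≠ m + 1 := by decide
  have hPadj : ∀ m : ZMod 4, (GreeneSphere n).Adj (ψ (qc m)) (ψ (qc (m+1))) := by
    intro m
    rcases hmap (qc_adj m) with h | h
    · exact h
    · exact absurd (qc_inj _ _ (hinjψ h)) (mne m)
  have hP02 : ψ (qc 0) ≠ ψ (qc 2) :=
    fun h => (by decide : ¬(0:ZMod 4) = 2) (qc_inj _ _ (hinjψ h))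
  have hP13 : ψ (qc 1) ≠ ψ (qc 3) :=
    fun h => (by decide : ¬(1:ZMod 4) = 3) (qc_inj _ _ (hinjψ h))
  obtain ⟨a, w, hw, hrep⟩ := FCQ hn (fun r => ψ (qc r)) hPadj hP02 hP13
  have hdiag := dih_diag hrep (candiag hn a w hw)
  intro s t hadj
  obtain ⟨ms, rfl⟩ := qc_surj s
  obtain ⟨mt, rfl⟩ := qc_surj t
  have hmne : ms ≠ mt := fun h => hadj.ne (by rw [h])
  rcases qc_cases ms mt hmne with h | h
  · exact h
  · exfalso
    apply hdiag ms
    show (GreeneSphere n).Adj (ψ (qc ms)) (ψ (qc (ms+2)))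
    rw [← h]
    exact hadj


end GSq


open GSq

/-- for `n ≥ 4`, every 4-cycle in the Greene sphere `G^sph_n` (the
image of an injective singular 2-cube `φ`) is rigid (induced) and monophobic:
every singular 3-cube with a face supported by it has at least one more face
supported by it. -/
theorem greeneSphere_squares_rigid_monophobic (n : ℕ) (hn : 4 ≤ n)
    (φ : (Fin 2 → Bool) → (ZMod (2 * n) ⊕ Bool))
    (hφ : IsGraphMap (Cube 2) (GreeneSphere n) φ) (hinj : Function.Injective φ) :
    (∀ s t, (GreeneSphere n).Adj (φ s) (φ t) → (Cube 2).Adj s t) ∧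
    ∀ σ : (Fin 3 → Bool) → (ZMod (2 * n) ⊕ Bool),
      IsGraphMap (Cube 3) (GreeneSphere n) σ →
      ∀ i b, Supports φ (face i b σ) →
        ∃ j c, (j, c) ≠ (i, b) ∧ Supports φ (face j c σ) := by
  have hn8 : 8 ≤ 2*n := by omega
  constructor
  · exact rigid hn8 φ hφ hinj
  · intro σ hσ i b hsup
    have mne : ∀ m : ZMod 4, m ≠ m + 1 := by decide
    have hτmap : IsGraphMap (Cube 2) (GreeneSphere n) (face i b σ) :=
      fun s t h => hσ (cube_ins_adj i b s t h)
    have hτinj : Function.Injective (face i b σ) := inj_of_range_eq _ φ hinj hsup.1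
    set P : ZMod 4 → ZMod (2*n) ⊕ Bool := fun r => face i b σ (qc r) with hPdef
    set P' : ZMod 4 → ZMod (2*n) ⊕ Bool := fun r => face i (!b) σ (qc r) with hP'def
    have hPadj : ∀ m, (GreeneSphere n).Adj (P m) (P (m+1)) := by
      intro m
      rcases hτmap (qc_adj m) with h | h
      · exact h
      · exact absurd (qc_inj _ _ (hτinj h)) (mne m)
    have hP02 : P 0 ≠ P 2 := fun h => (by decide : ¬(0:ZMod 4) = 2) (qc_inj _ _ (hτinj h))
    have hP13 : P 1 ≠ P 3 := fun h => (by decide : ¬(1:ZMod 4) = 3) (qc_inj _ _ (hτinj h))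
    obtain ⟨a, w, hw, hrep⟩ := FCQ hn8 P hPadj hP02 hP13
    have hdiagP : ∀ m, ¬ (GreeneSphere n).Adj (P m) (P (m+2)) :=
      dih_diag hrep (candiag hn8 a w hw)
    have h1 : ∀ m, AdjOrEq (P m) (P' m) := fun m => hσ (cube_ins_flip i b (qc m))
    have h2 : ∀ m, AdjOrEq (P' m) (P' (m+1)) :=
      fun m => hσ (cube_ins_adj i (!b) _ _ (qc_adj m))
    have hSO : (∃ m, P' m = P (m+3) ∧ P' (m+1) = P (m+2)) ∨ DihRep P' P := by
      rcases hrep with ⟨s, hs | hs⟩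
      · -- rotation
        have hPg : ∀ m, P (m - s) = can a w m := by
          intro m; have := hs (m - s); rwa [show m - s + s = m from by ring] at this
        have C := CORE hn8 a w hw (fun m => P' (m - s))
          (by have := h1 (0 - s); rwa [hPg 0] at this)
          (by have := h1 (1 - s); rwa [hPg 1] at this)
          (by have := h1 (2 - s); rwa [hPg 2] at this)
          (by have := h1 (3 - s); rwa [hPg 3] at this)
          (by intro m
              have := h2 (m - s)
              rwa [show m - s + 1 = (m+1) - s from by ring] at this)
        rcases C with ⟨m, c1, c2⟩ | hdr
        · left
          refine ⟨m - s, ?_, ?_⟩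
          · rw [show (m - s) + 3 = (m+3) - s from by ring, hPg (m+3)]
            exact c1
          · rw [show (m - s) + 1 = (m+1) - s from by ring,
              show (m - s) + 2 = (m+2) - s from by ring, hPg (m+2)]
            exact c2
        · right
          have hPQ : DihRep P' (fun m => P' (m - s)) := by
            refine ⟨s, Or.inl fun m => ?_⟩
            show P' m = P' ((m + s) - s)
            rw [show (m + s) - s = m from by ring]
          exact dih_trans (dih_trans hPQ hdr) (dih_symm ⟨s, Or.inl hs⟩)
      · -- reflection
        have hPg : ∀ m, P (s - m) = can a w m := by
          intro m; have := hs (s - m); rwa [show s - (s - m) = m from by ring] at this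
        have C := CORE hn8 a w hw (fun m => P' (s - m))
          (by have := h1 (s - 0); rwa [hPg 0] at this)
          (by have := h1 (s - 1); rwa [hPg 1] at this)
          (by have := h1 (s - 2); rwa [hPg 2] at this)
          (by have := h1 (s - 3); rwa [hPg 3] at this)
          (by intro m
              have := adjOrEq_symm (h2 (s - (m+1)))
              rwa [show s - (m+1) + 1 = s - m from by ring] at this)
        rcases C with ⟨m, c1, c2⟩ | hdr
        · left
          have c1' : P' (s - m) = can a w (m+3) := c1
          have c2' : P' (s - (m+1)) = can a w (m+2) := c2
          refine ⟨s - m - 1, ?_, ?_⟩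
          · rw [show s - m - 1 = s - (m+1) from by ring, c2',
              show (s - (m+1)) + 3 = (s - (m+2)) + 4 from by ring, z44, hPg (m+2)]
          · rw [show (s - m - 1) + 1 = s - m from by ring, c1',
              show (s - m - 1) + 2 = (s - (m+3)) + 4 from by ring, z44, hPg (m+3)]
        · right
          have hPQ : DihRep P' (fun m => P' (s - m)) := by
            refine ⟨s, Or.inr fun m => ?_⟩
            show P' m = P' (s - (s - m))
            rw [show s - (s - m) = m from by ring]
          exact dih_trans (dih_trans hPQ hdr) (dih_symm ⟨s, Or.inr hs⟩)
    rcases hSO with ⟨m, c1, c2⟩ | hdr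
    · -- a side face is also supported
      obtain ⟨j, c, hji, u, hu, hX⟩ := cube_side i b m
      refine ⟨j, c, fun h => hji (congrArg Prod.fst h), ?_⟩
      have hσX : ∀ r, σ (sideX i b m r) = P (m + r) := by
        intro r
        rcases zfour r with rfl | rfl | rfl | rfl
        · show σ (i.insertNth b (qc m)) = P (m + 0)
          rw [add_zero]; rfl
        · show σ (i.insertNth b (qc (m+1))) = P (m + 1); rfl
        · show σ (i.insertNth (!b) (qc (m+1))) = P (m + 2)
          exact c2
        · show σ (i.insertNth (!b) (qc m)) = P (m + 3)
          exact c1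
      have hy : ∀ r, face j c σ (qc r) = P (m + u r) := by
        intro r
        show σ (j.insertNth c (qc r)) = _
        rw [hX r, hσX (u r)]
      have hu2 : ∀ r, u (r+2) = u r + 2 := by
        rcases hu with h | h <;> intro r
        · rw [show r + 2 = (r+1)+1 from by ring, h (r+1), h r]; ring
        · rw [show r + 2 = (r+1)+1 from by ring, h (r+1), h r]
          have e : (4 : ZMod 4) = 0 := by decide
          linear_combination -e
      have husurj : ∀ v : ZMod 4, ∃ r, m + u r = v := by
        rcases hu with h | h
        · have e1 : u 1 = u 0 + 1 := by have := h 0; rwa [zero_add] at this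
          have e2 : u 2 = u 0 + 2 := by
            rw [show (2 : ZMod 4) = 1 + 1 from by decide, h 1, e1]; ring
          have e3 : u 3 = u 0 + 3 := by
            rw [show (3 : ZMod 4) = 2 + 1 from by decide, h 2, e2]; ring
          have hlin : ∀ r, u r = u 0 + r := by
            intro r
            rcases zfour r with rfl | rfl | rfl | rfl
            · rw [add_zero]
            · exact e1
            · exact e2
            · exact e3
          intro v
          exact ⟨v - m - u 0, by rw [hlin]; ring⟩
        · have e1 : u 1 = u 0 - 1 := by have := h 0; rwa [zero_add] at this
          have e2 : u 2 = u 0 - 2 := by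
            rw [show (2 : ZMod 4) = 1 + 1 from by decide, h 1, e1]; ring
          have e3 : u 3 = u 0 - 3 := by
            rw [show (3 : ZMod 4) = 2 + 1 from by decide, h 2, e2]; ring
          have hlin : ∀ r, u r = u 0 - r := by
            intro r
            rcases zfour r with rfl | rfl | rfl | rfl
            · rw [sub_zero]
            · exact e1
            · exact e2
            · exact e3
          intro v
          exact ⟨u 0 - (v - m), by rw [hlin]; ring⟩
      refine SUPP φ (face j c σ) hφ hinj (fun r => P (m + u r)) hy ?_ ?_
      · rw [← hsup.1]
        ext x
        rw [range_corners, range_corners]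
        simp only [hy]
        constructor
        · rintro ⟨r, rfl⟩; exact ⟨m + u r, rfl⟩
        · rintro ⟨r', rfl⟩
          obtain ⟨r, hr⟩ := husurj r'
          exact ⟨r, by rw [hr]⟩
      · intro r
        show ¬ (GreeneSphere n).Adj (P (m + u r)) (P (m + u (r+2)))
        rw [hu2 r, show m + (u r + 2) = (m + u r) + 2 from by ring]
        exact hdiagP (m + u r)
    · -- the opposite face is supported
      refine ⟨i, !b, fun h => b.not_ne_self (congrArg Prod.snd h), ?_⟩
      refine SUPP φ (face i (!b) σ) hφ hinj P' (fun r => rfl) ?_ (dih_diag hdr hdiagP)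
      rw [← hsup.1]
      ext x
      rw [range_corners, range_corners]
      exact dih_range hdr x
end
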